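/- In the tableau system for LBF, for every tableau T and every node v = (w, Γ, σ) of T, if v is a leaf then either Γ contains only literals or at least one tableau rule among (∧), (∨), (∃), (∀), (◇), (END) can be applied at v. Consequently every partial tableau for an LBF formula can be extended to a saturated tableau. -/

import Mathlib

set_option maxHeartbeats 1000000

/-! ## Syntax of first-order modal logic (FOML)

Predicate symbols and variables are represented by natural numbers; an atom
`atom p args` applies the predicate symbol `p` to the list of variables `args`
(the arity of `p` in this occurrence is the length of `args`). -/
inductive Formula : Type where
  | atom (p : ℕ) (args : List ℕ)
  | neg  (φ : Formula)
  | and  (φ ψ : Formula)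
  | or   (φ ψ : Formula)
  | box  (φ : Formula)
  | dia  (φ : Formula)
  | ex   (x : ℕ) (φ : Formula)
  | all  (x : ℕ) (φ : Formula)
deriving DecidableEq

namespace Formula

def imp (φ ψ : Formula) : Formula := .or φ.neg ψ
def biimp (φ ψ : Formula) : Formula := .and (imp φ ψ) (imp ψ φ)
/-- a fixed tautology `⊤` -/
def top : Formula := .or (.atom 0 []) (.neg (.atom 0 []))
/-- a fixed contradiction `⊥` -/
def bot : Formula := .and (.atom 0 []) (.neg (.atom 0 []))

end Formula

def bigAnd (l : List Formula) : Formula := l.foldr Formula.and Formula.top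
def bigOr  (l : List Formula) : Formula := l.foldr Formula.or Formula.bot

/-! ## Semantics: Kripke structures with world-relative domains -/

structure Model where
  W : Type
  D : Type
  R : W → W → Prop
  dom : W → Set D
  ρ : W → ℕ → Set (List D)

/-- `M` is an increasing domain model: nonempty countable set of worlds, nonempty
countable domain, nonempty local domains that increase along the accessibility
relation, and interpretations of predicates at a world take values in the local
domain of that world. -/
def Model.Increasing (M : Model) : Prop :=
  Nonempty M.W ∧ Nonempty M.D ∧ Countable M.W ∧ Countable M.D ∧
    (∀ w, (M.dom w).Nonempty) ∧
    (∀ w v, M.R w v → M.dom w ⊆ M.dom v) ∧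
    (∀ w p l, l ∈ M.ρ w p → ∀ d ∈ l, d ∈ M.dom w)

def Model.sat (M : Model) : M.W → (ℕ → M.D) → Formula → Prop
  | w, σ, .atom p args => args.map σ ∈ M.ρ w p
  | w, σ, .neg φ => ¬ M.sat w σ φ
  | w, σ, .and φ ψ => M.sat w σ φ ∧ M.sat w σ ψ
  | w, σ, .or φ ψ => M.sat w σ φ ∨ M.sat w σ ψ
  | w, σ, .box φ => ∀ v, M.R w v → M.sat v σ φ
  | w, σ, .dia φ => ∃ v, M.R w v ∧ M.sat v σ φ
  | w, σ, .ex x φ => ∃ d ∈ M.dom w, M.sat w (Function.update σ x d) φ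
  | w, σ, .all x φ => ∀ d ∈ M.dom w, M.sat w (Function.update σ x d) φ

/-- the assignment `σ` is relevant at the world `w` -/
def Model.relevant (M : Model) (w : M.W) (σ : ℕ → M.D) : Prop := ∀ x, σ x ∈ M.dom w

/-- satisfiability over increasing domain models -/
def Satisfiable (φ : Formula) : Prop :=
  ∃ (M : Model), M.Increasing ∧ ∃ (w : M.W) (σ : ℕ → M.D), M.relevant w σ ∧ M.sat w σ φ
/-! ## Free and bound variables, cleanliness, substitution, α-equivalence -/

namespace Formula

def fv : Formula → Finset ℕ
  | .atom _ args => args.toFinset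
  | .neg φ => φ.fv
  | .and φ ψ => φ.fv ∪ ψ.fv
  | .or φ ψ => φ.fv ∪ ψ.fv
  | .box φ => φ.fv
  | .dia φ => φ.fv
  | .ex x φ => φ.fv.erase x
  | .all x φ => φ.fv.erase x

def bv : Formula → Finset ℕ
  | .atom _ _ => ∅
  | .neg φ => φ.bv
  | .and φ ψ => φ.bv ∪ ψ.bv
  | .or φ ψ => φ.bv ∪ ψ.bv
  | .box φ => φ.bv
  | .dia φ => φ.bv
  | .ex x φ => insert x φ.bv
  | .all x φ => insert x φ.bv

/-- every use of a quantifier in the formula quantifies a distinct variable -/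
def uniqueBinders : Formula → Prop
  | .atom _ _ => True
  | .neg φ => φ.uniqueBinders
  | .and φ ψ => φ.uniqueBinders ∧ ψ.uniqueBinders ∧ Disjoint φ.bv ψ.bv
  | .or φ ψ => φ.uniqueBinders ∧ ψ.uniqueBinders ∧ Disjoint φ.bv ψ.bv
  | .box φ => φ.uniqueBinders
  | .dia φ => φ.uniqueBinders
  | .ex x φ => φ.uniqueBinders ∧ x ∉ φ.bv
  | .all x φ => φ.uniqueBinders ∧ x ∉ φ.bv

/-- a formula is clean if no variable occurs both bound and free in it and
every use of a quantifier quantifies a distinct variable -/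
def Clean (φ : Formula) : Prop := φ.uniqueBinders ∧ Disjoint φ.fv φ.bv

/-- `φ.subst y z` is `φ[z/y]`: replace every free occurrence of `y` by `z` -/
def subst (y z : ℕ) : Formula → Formula
  | .atom p args => .atom p (args.map fun v => if v = y then z else v)
  | .neg φ => .neg (φ.subst y z)
  | .and φ ψ => .and (φ.subst y z) (ψ.subst y z)
  | .or φ ψ => .or (φ.subst y z) (ψ.subst y z)
  | .box φ => .box (φ.subst y z)
  | .dia φ => .dia (φ.subst y z)
  | .ex x φ => if x = y then .ex x φ else .ex x (φ.subst y z)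
  | .all x φ => if x = y then .all x φ else .all x (φ.subst y z)

def isLiteralB : Formula → Bool
  | .atom _ _ => true
  | .neg (.atom _ _) => true
  | _ => false

/-- a module is a literal, a `□`-formula, or a `◇`-formula -/
def isModuleB : Formula → Bool
  | .box _ => true
  | .dia _ => true
  | φ => φ.isLiteralB

/-- the component set `C(φ)` of a formula -/
def comps : Formula → Finset Formula
  | .and φ ψ => φ.comps ∪ ψ.comps
  | .or φ ψ => φ.comps ∪ ψ.comps
  | .ex x φ => insert (.ex x φ) φ.comps
  | .all x φ => insert (.all x φ) φ.comps
  | φ => {φ}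

end Formula

/-- α-equivalence (renaming of bound variables) -/
inductive AlphaEq : Formula → Formula → Prop where
  | atom (p : ℕ) (args : List ℕ) : AlphaEq (.atom p args) (.atom p args)
  | neg {φ φ'} : AlphaEq φ φ' → AlphaEq (.neg φ) (.neg φ')
  | and {φ φ' ψ ψ'} : AlphaEq φ φ' → AlphaEq ψ ψ' → AlphaEq (.and φ ψ) (.and φ' ψ')
  | or {φ φ' ψ ψ'} : AlphaEq φ φ' → AlphaEq ψ ψ' → AlphaEq (.or φ ψ) (.or φ' ψ')
  | box {φ φ'} : AlphaEq φ φ' → AlphaEq (.box φ) (.box φ')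
  | dia {φ φ'} : AlphaEq φ φ' → AlphaEq (.dia φ) (.dia φ')
  | ex {x x' : ℕ} {φ φ'}
      (h : ∀ z, z ∉ φ.bv ∪ φ'.bv → AlphaEq (φ.subst x z) (φ'.subst x' z)) :
      AlphaEq (.ex x φ) (.ex x' φ')
  | all {x x' : ℕ} {φ φ'}
      (h : ∀ z, z ∉ φ.bv ∪ φ'.bv → AlphaEq (φ.subst x z) (φ'.subst x' z)) :
      AlphaEq (.all x φ) (.all x' φ')

/-- a finite set of formulas is clean if the conjunction of its members is clean -/
def CleanSet (Γ : Finset Formula) : Prop :=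
  (∀ φ ∈ Γ, φ.uniqueBinders) ∧
    Disjoint (Γ.sup Formula.fv) (Γ.sup Formula.bv) ∧
    (∀ φ ∈ Γ, ∀ ψ ∈ Γ, φ ≠ ψ → Disjoint φ.bv ψ.bv)

/-- `Γ` is Existential-safe: every component of every formula of `Γ` is a module
or universally quantified -/
def ExSafe (Γ : Finset Formula) : Prop :=
  ∀ φ ∈ Γ, ∀ β ∈ φ.comps, β.isModuleB = true ∨ ∃ (x : ℕ) (γ : Formula), β = .all x γ
/-! ## Tableau nodes and the LBF tableau rules -/

/-- a tableau node `(w : Γ, σ)`: a world name (a sequence of symbols), a finite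
set of formulas, and a partial identity assignment represented by its domain -/
structure Node where
  name : List ℕ
  Γ : Finset Formula
  σ : Finset ℕ

/-- the bodies of the `◇`-formulas of `Γ` (listed in some fixed order) -/
noncomputable def diaBodies (Γ : Finset Formula) : List Formula :=
  Γ.toList.filterMap fun φ => match φ with | .dia ψ => some ψ | _ => none

/-- the bodies of the `□`-formulas of `Γ` -/
noncomputable def boxBodies (Γ : Finset Formula) : Finset Formula :=
  (Γ.toList.filterMap fun φ => match φ with | .box ψ => some ψ | _ => none).toFinset

/-- `Step n cs` : the tableau rule relation; from the premise node `n` one rule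
application produces the conclusion nodes `cs` (for the branching rule `(∨)` a
non-deterministic choice of one branch is made). -/
inductive Step : Node → List Node → Prop where
  | and {w Γ σ} {φ ψ : Formula} (h : Formula.and φ ψ ∈ Γ) :
      Step ⟨w, Γ, σ⟩ [⟨w, insert φ (insert ψ (Γ.erase (.and φ ψ))), σ⟩]
  | orL {w Γ σ} {φ ψ : Formula} (h : Formula.or φ ψ ∈ Γ) :
      Step ⟨w, Γ, σ⟩ [⟨w, insert φ (Γ.erase (.or φ ψ)), σ⟩]
  | orR {w Γ σ} {φ ψ : Formula} (h : Formula.or φ ψ ∈ Γ) :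
      Step ⟨w, Γ, σ⟩ [⟨w, insert ψ (Γ.erase (.or φ ψ)), σ⟩]
  | exis {w Γ σ} {x : ℕ} {φ : Formula} (h : Formula.ex x φ ∈ Γ) :
      Step ⟨w, Γ, σ⟩ [⟨w, insert φ (Γ.erase (.ex x φ)), insert x σ⟩]
  | alls {w Γ σ} {y : ℕ} {φ : Formula} (f : ℕ → Formula)
      (h : Formula.all y φ ∈ Γ)
      (hsafe : ExSafe (Γ.erase (.all y φ)))
      (hα : ∀ z ∈ σ, AlphaEq (f z) (φ.subst y z))
      (hclean : CleanSet ((Γ.erase (.all y φ)) ∪ σ.image f))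
      (hσ : ∀ v ∈ σ, v ∉ ((Γ.erase (.all y φ)) ∪ σ.image f).sup Formula.bv) :
      Step ⟨w, Γ, σ⟩ [⟨w, (Γ.erase (.all y φ)) ∪ σ.image f, σ⟩]
  | diam {w Γ σ} (hmod : ∀ φ ∈ Γ, φ.isModuleB = true) (hne : diaBodies Γ ≠ []) :
      Step ⟨w, Γ, σ⟩
        (((List.range (diaBodies Γ).length).zip (diaBodies Γ)).map fun p => ⟨w ++ [p.1], insert p.2 (boxBodies Γ), σ⟩)
  | fin {w Γ σ} (hmod : ∀ φ ∈ Γ, φ.isModuleB = true) (hnd : diaBodies Γ = [])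
      (hbox : boxBodies Γ ≠ ∅) :
      Step ⟨w, Γ, σ⟩ [⟨w, Γ.filter (fun φ => φ.isLiteralB = true), σ⟩]

/-! ## Tableaux as finitely branching trees -/

inductive Tab : Type where
  | mk (n : Node) (k : ℕ) (children : Fin k → Tab)

def Tab.label : Tab → Node
  | .mk n _ _ => n

def Tab.isLeaf : Tab → Prop
  | .mk _ k _ => k = 0

/-- a well-formed tableau: the children of every internal node are obtained
from its label by one application of a tableau rule -/
def Tab.WF : Tab → Prop
  | .mk _ 0 _ => True
  | .mk n (k + 1) cs =>
      Step n ((List.ofFn cs).map Tab.label) ∧ ∀ i, (cs i).WF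

/-- `Subtree t s` : `s` is a subtree of `t` -/
inductive Subtree : Tab → Tab → Prop where
  | refl (t : Tab) : Subtree t t
  | child {n k} {cs : Fin k → Tab} {s : Tab} (i : Fin k) (h : Subtree (cs i) s) :
      Subtree (.mk n k cs) s

/-- a tableau is saturated if every leaf node contains only literals -/
def Saturated (t : Tab) : Prop :=
  ∀ s, Subtree t s → s.isLeaf → ∀ φ ∈ s.label.Γ, φ.isLiteralB = true

/-- a tableau is open if no node contains both a formula and its negation -/
def OpenT (t : Tab) : Prop :=
  ∀ s, Subtree t s → ∀ φ : Formula, ¬ (φ ∈ s.label.Γ ∧ Formula.neg φ ∈ s.label.Γ)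

/-- `Extends t' t` : the tableau `t'` extends the (partial) tableau `t` -/
inductive Extends : Tab → Tab → Prop where
  | leaf {t : Tab} {n : Node} {cs : Fin 0 → Tab} (h : t.label = n) :
      Extends t (.mk n 0 cs)
  | node {n : Node} {k : ℕ} {cs cs' : Fin k → Tab} (h : ∀ i, Extends (cs' i) (cs i)) :
      Extends (.mk n k cs') (.mk n k cs)

/-- the node is clean: its formula set is clean and the variables of its
assignment do not occur bound in its formulas -/
def NodeClean (n : Node) : Prop :=
  CleanSet n.Γ ∧ ∀ v ∈ n.σ, v ∉ n.Γ.sup Formula.bv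
/-! ## The loosely bundled fragment (LBF)

Formulas are assumed to be in negation normal form, so the bundled fragments
below only allow negation in front of atoms, together with both `∧`/`∨` and
`□`/`◇`. A quantifier prefix `∃x1…∃xk ∀y1…∀yl` is represented by two lists. -/

def exAllPrefix (xs ys : List ℕ) (ψ : Formula) : Formula :=
  xs.foldr Formula.ex (ys.foldr Formula.all ψ)

mutual
  /-- the `ψ`-formulas of LBF: boolean combinations of literals and modal formulas -/
  inductive LBFpsi : Formula → Prop where
    | atom (p : ℕ) (args : List ℕ) : LBFpsi (.atom p args)
    | natom (p : ℕ) (args : List ℕ) : LBFpsi (.neg (.atom p args))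
    | and {φ ψ : Formula} : LBFpsi φ → LBFpsi ψ → LBFpsi (.and φ ψ)
    | or {φ ψ : Formula} : LBFpsi φ → LBFpsi ψ → LBFpsi (.or φ ψ)
    | box {φ : Formula} : LBFalpha φ → LBFpsi (.box φ)
    | dia {φ : Formula} : LBFalpha φ → LBFpsi (.dia φ)

  /-- the `α`-formulas of LBF (the loosely bundled fragment itself) -/
  inductive LBFalpha : Formula → Prop where
    | psi {φ : Formula} : LBFpsi φ → LBFalpha φ
    | and {φ ψ : Formula} : LBFalpha φ → LBFalpha ψ → LBFalpha (.and φ ψ)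
    | or {φ ψ : Formula} : LBFalpha φ → LBFalpha ψ → LBFalpha (.or φ ψ)
    | exAll {xs ys : List ℕ} {ψ : Formula} : LBFpsi ψ → LBFalpha (exAllPrefix xs ys ψ)
end

/-! ### Auxiliary development -/

open Formula

/-- skeleton of a formula: forgets all variables -/
inductive Skel : Type where
  | satom | sneg (s : Skel) | sand (s t : Skel) | sor (s t : Skel)
  | sbox (s : Skel) | sdia (s : Skel) | sex (s : Skel) | sall (s : Skel)
deriving DecidableEq

def Formula.shape : Formula → Skel
  | .atom _ _ => .satom
  | .neg φ => .sneg φ.shape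
  | .and φ ψ => .sand φ.shape ψ.shape
  | .or φ ψ => .sor φ.shape ψ.shape
  | .box φ => .sbox φ.shape
  | .dia φ => .sdia φ.shape
  | .ex _ φ => .sex φ.shape
  | .all _ φ => .sall φ.shape

/-- modal rank -/
def Skel.mrank : Skel → ℕ
  | .satom => 0
  | .sneg s => s.mrank
  | .sand s t => max s.mrank t.mrank
  | .sor s t => max s.mrank t.mrank
  | .sbox s => s.mrank + 1
  | .sdia s => s.mrank + 1
  | .sex s => s.mrank
  | .sall s => s.mrank

/-- count of existential quantifiers not under a modality -/
def Skel.exC : Skel → ℕ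
  | .satom => 0
  | .sneg s => s.exC
  | .sand s t => s.exC + t.exC
  | .sor s t => s.exC + t.exC
  | .sbox _ => 0
  | .sdia _ => 0
  | .sex s => s.exC + 1
  | .sall s => s.exC

/-- weighted size, with parameter `c` weighting universal quantifiers -/
def Skel.gval (c : ℕ) : Skel → ℕ
  | .satom => 1
  | .sneg s => s.gval c + 1
  | .sand s t => s.gval c + t.gval c + 1
  | .sor s t => s.gval c + t.gval c + 1
  | .sbox _ => 1
  | .sdia _ => 1
  | .sex s => s.gval c + 1
  | .sall s => (c + 2) * s.gval c + 1

lemma Skel.gval_pos (c : ℕ) (s : Skel) : 0 < s.gval c := by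
  cases s <;> simp [Skel.gval] <;> omega

/-- `mapVar g` replaces every variable occurrence (free, bound, binders) via `g` -/
def Formula.mapVar (g : ℕ → ℕ) : Formula → Formula
  | .atom p args => .atom p (args.map g)
  | .neg φ => .neg (φ.mapVar g)
  | .and φ ψ => .and (φ.mapVar g) (ψ.mapVar g)
  | .or φ ψ => .or (φ.mapVar g) (ψ.mapVar g)
  | .box φ => .box (φ.mapVar g)
  | .dia φ => .dia (φ.mapVar g)
  | .ex x φ => .ex (g x) (φ.mapVar g)
  | .all x φ => .all (g x) (φ.mapVar g)

@[simp] lemma shape_mapVar (g : ℕ → ℕ) (φ : Formula) : (φ.mapVar g).shape = φ.shape := by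
  induction φ <;> simp [Formula.mapVar, Formula.shape, *]

@[simp] lemma shape_subst (y z : ℕ) (φ : Formula) : (φ.subst y z).shape = φ.shape := by
  induction φ <;> simp [Formula.subst, Formula.shape, *] <;> split <;> simp [Formula.shape, *]

@[simp] lemma bv_subst (y z : ℕ) (φ : Formula) : (φ.subst y z).bv = φ.bv := by
  induction φ <;> simp [Formula.subst, Formula.bv, *] <;> split <;> simp [Formula.bv, *]

lemma fv_subst_subset (y z : ℕ) (φ : Formula) :
    (φ.subst y z).fv ⊆ (φ.fv.erase y) ∪ {z} := by
  induction φ with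
  | atom p args =>
      intro v hv
      simp only [Formula.subst, Formula.fv, List.mem_toFinset, List.mem_map] at hv
      obtain ⟨a, ha, rfl⟩ := hv
      by_cases h : a = y
      · simp [h]
      · simp only [h, if_false, Finset.mem_union, Finset.mem_erase, Finset.mem_singleton]
        exact Or.inl ⟨h, by simpa [Formula.fv] using ha⟩
  | neg φ ih => exact ih
  | and φ ψ ih1 ih2 =>
      simp only [Formula.subst, Formula.fv, Finset.union_subset_iff]
      constructor
      · exact ih1.trans (by intro v; simp [Finset.mem_erase]; tauto)
      · exact ih2.trans (by intro v; simp [Finset.mem_erase]; tauto)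
  | or φ ψ ih1 ih2 =>
      simp only [Formula.subst, Formula.fv, Finset.union_subset_iff]
      constructor
      · exact ih1.trans (by intro v; simp [Finset.mem_erase]; tauto)
      · exact ih2.trans (by intro v; simp [Finset.mem_erase]; tauto)
  | box φ ih => exact ih
  | dia φ ih => exact ih
  | ex x φ ih =>
      simp only [Formula.subst]
      split
      · next h =>
          subst h
          intro v hv
          simp only [Formula.fv, Finset.mem_erase] at hv
          simp only [Formula.fv, Finset.mem_union, Finset.mem_erase, Finset.mem_singleton]
          exact Or.inl ⟨hv.1, hv.1, hv.2⟩
      · next h =>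
          intro v hv
          simp only [Formula.fv, Finset.mem_erase] at hv
          have := ih hv.2
          simp only [Finset.mem_union, Finset.mem_erase, Finset.mem_singleton,
            Formula.fv] at this ⊢
          rcases this with ⟨hvy, hvf⟩ | h2
          · exact Or.inl ⟨hvy, hv.1, hvf⟩
          · exact Or.inr h2
  | all x φ ih =>
      simp only [Formula.subst]
      split
      · next h =>
          subst h
          intro v hv
          simp only [Formula.fv, Finset.mem_erase] at hv
          simp only [Formula.fv, Finset.mem_union, Finset.mem_erase, Finset.mem_singleton]
          exact Or.inl ⟨hv.1, hv.1, hv.2⟩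
      · next h =>
          intro v hv
          simp only [Formula.fv, Finset.mem_erase] at hv
          have := ih hv.2
          simp only [Finset.mem_union, Finset.mem_erase, Finset.mem_singleton,
            Formula.fv] at this ⊢
          rcases this with ⟨hvy, hvf⟩ | h2
          · exact Or.inl ⟨hvy, hv.1, hvf⟩
          · exact Or.inr h2

lemma uB_subst {φ : Formula} (h : φ.uniqueBinders) (y z : ℕ) :
    (φ.subst y z).uniqueBinders := by
  induction φ with
  | atom p args => trivial
  | neg φ ih => exact ih h
  | and φ ψ ih1 ih2 =>
      obtain ⟨h1, h2, h3⟩ := h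
      exact ⟨ih1 h1, ih2 h2, by simpa using h3⟩
  | or φ ψ ih1 ih2 =>
      obtain ⟨h1, h2, h3⟩ := h
      exact ⟨ih1 h1, ih2 h2, by simpa using h3⟩
  | box φ ih => exact ih h
  | dia φ ih => exact ih h
  | ex x φ ih =>
      obtain ⟨h1, h2⟩ := h
      simp only [Formula.subst]
      split
      · exact ⟨h1, h2⟩
      · exact ⟨ih h1, by simpa using h2⟩
  | all x φ ih =>
      obtain ⟨h1, h2⟩ := h
      simp only [Formula.subst]
      split
      · exact ⟨h1, h2⟩
      · exact ⟨ih h1, by simpa using h2⟩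
@[simp] lemma bv_mapVar (g : ℕ → ℕ) (φ : Formula) : (φ.mapVar g).bv = φ.bv.image g := by
  induction φ <;> simp [Formula.mapVar, Formula.bv, Finset.image_union, Finset.image_insert, *]

/-- a variant of `Finset.image_erase` for functions injective on a superset -/
lemma image_erase_of_injOn {s t : Finset ℕ} {g : ℕ → ℕ} {x : ℕ} (hs : s ⊆ t) (hx : x ∈ t)
    (hinj : ∀ v ∈ t, ∀ w ∈ t, g v = g w → v = w) :
    (s.image g).erase (g x) = (s.erase x).image g := by
  ext v
  simp only [Finset.mem_erase, Finset.mem_image]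
  constructor
  · rintro ⟨hne, u, hu, rfl⟩
    exact ⟨u, ⟨fun h => hne (by rw [h]), hu⟩, rfl⟩
  · rintro ⟨u, ⟨hux, hu⟩, rfl⟩
    exact ⟨fun h => hux (hinj u (hs hu) x hx h), u, hu, rfl⟩

lemma fv_mapVar (g : ℕ → ℕ) (φ : Formula)
    (hinj : ∀ v ∈ φ.fv ∪ φ.bv, ∀ w ∈ φ.fv ∪ φ.bv, g v = g w → v = w) :
    (φ.mapVar g).fv = φ.fv.image g := by
  induction φ with
  | atom p args =>
      simp only [Formula.mapVar, Formula.fv]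
      ext v
      simp
  | neg φ ih => exact ih hinj
  | and φ ψ ih1 ih2 =>
      have sub1 : φ.fv ∪ φ.bv ⊆ (Formula.and φ ψ).fv ∪ (Formula.and φ ψ).bv := by
        intro v; simp only [Formula.fv, Formula.bv, Finset.mem_union]; tauto
      have sub2 : ψ.fv ∪ ψ.bv ⊆ (Formula.and φ ψ).fv ∪ (Formula.and φ ψ).bv := by
        intro v; simp only [Formula.fv, Formula.bv, Finset.mem_union]; tauto
      simp only [Formula.mapVar, Formula.fv, Finset.image_union]
      rw [ih1 (fun v hv w hw => hinj v (sub1 hv) w (sub1 hw)),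
          ih2 (fun v hv w hw => hinj v (sub2 hv) w (sub2 hw))]
  | or φ ψ ih1 ih2 =>
      have sub1 : φ.fv ∪ φ.bv ⊆ (Formula.or φ ψ).fv ∪ (Formula.or φ ψ).bv := by
        intro v; simp only [Formula.fv, Formula.bv, Finset.mem_union]; tauto
      have sub2 : ψ.fv ∪ ψ.bv ⊆ (Formula.or φ ψ).fv ∪ (Formula.or φ ψ).bv := by
        intro v; simp only [Formula.fv, Formula.bv, Finset.mem_union]; tauto
      simp only [Formula.mapVar, Formula.fv, Finset.image_union]
      rw [ih1 (fun v hv w hw => hinj v (sub1 hv) w (sub1 hw)),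
          ih2 (fun v hv w hw => hinj v (sub2 hv) w (sub2 hw))]
  | box φ ih => exact ih hinj
  | dia φ ih => exact ih hinj
  | ex x φ ih =>
      have sub : φ.fv ∪ φ.bv ⊆ (Formula.ex x φ).fv ∪ (Formula.ex x φ).bv := by
        intro v
        simp only [Formula.fv, Formula.bv, Finset.mem_union, Finset.mem_erase, Finset.mem_insert]
        by_cases h : v = x <;> tauto
      have hx : x ∈ (Formula.ex x φ).fv ∪ (Formula.ex x φ).bv := by
        simp [Formula.bv]
      simp only [Formula.mapVar, Formula.fv]
      rw [ih (fun v hv w hw => hinj v (sub hv) w (sub hw))]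
      exact image_erase_of_injOn (fun v hv => sub (Finset.mem_union_left _ hv)) hx hinj
  | all x φ ih =>
      have sub : φ.fv ∪ φ.bv ⊆ (Formula.all x φ).fv ∪ (Formula.all x φ).bv := by
        intro v
        simp only [Formula.fv, Formula.bv, Finset.mem_union, Finset.mem_erase, Finset.mem_insert]
        by_cases h : v = x <;> tauto
      have hx : x ∈ (Formula.all x φ).fv ∪ (Formula.all x φ).bv := by
        simp [Formula.bv]
      simp only [Formula.mapVar, Formula.fv]
      rw [ih (fun v hv w hw => hinj v (sub hv) w (sub hw))]
      exact image_erase_of_injOn (fun v hv => sub (Finset.mem_union_left _ hv)) hx hinj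

lemma uB_mapVar {g : ℕ → ℕ} {φ : Formula}
    (hinj : ∀ v ∈ φ.bv, ∀ w ∈ φ.bv, g v = g w → v = w) (h : φ.uniqueBinders) :
    (φ.mapVar g).uniqueBinders := by
  induction φ with
  | atom p args => trivial
  | neg φ ih => exact ih hinj h
  | and φ ψ ih1 ih2 =>
      obtain ⟨h1, h2, h3⟩ := h
      have sub1 : φ.bv ⊆ (Formula.and φ ψ).bv := by
        intro v; simp only [Formula.bv, Finset.mem_union]; tauto
      have sub2 : ψ.bv ⊆ (Formula.and φ ψ).bv := by
        intro v; simp only [Formula.bv, Finset.mem_union]; tauto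
      refine ⟨ih1 (fun v hv w hw => hinj v (sub1 hv) w (sub1 hw)) h1,
        ih2 (fun v hv w hw => hinj v (sub2 hv) w (sub2 hw)) h2, ?_⟩
      simp only [bv_mapVar, Finset.disjoint_left, Finset.mem_image]
      rintro a ⟨u, hu, rfl⟩ ⟨u', hu', heq⟩
      have := hinj u' (sub2 hu') u (sub1 hu) heq
      subst this
      exact Finset.disjoint_left.mp h3 hu hu'
  | or φ ψ ih1 ih2 =>
      obtain ⟨h1, h2, h3⟩ := h
      have sub1 : φ.bv ⊆ (Formula.or φ ψ).bv := by
        intro v; simp only [Formula.bv, Finset.mem_union]; tauto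
      have sub2 : ψ.bv ⊆ (Formula.or φ ψ).bv := by
        intro v; simp only [Formula.bv, Finset.mem_union]; tauto
      refine ⟨ih1 (fun v hv w hw => hinj v (sub1 hv) w (sub1 hw)) h1,
        ih2 (fun v hv w hw => hinj v (sub2 hv) w (sub2 hw)) h2, ?_⟩
      simp only [bv_mapVar, Finset.disjoint_left, Finset.mem_image]
      rintro a ⟨u, hu, rfl⟩ ⟨u', hu', heq⟩
      have := hinj u' (sub2 hu') u (sub1 hu) heq
      subst this
      exact Finset.disjoint_left.mp h3 hu hu'
  | box φ ih => exact ih hinj h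
  | dia φ ih => exact ih hinj h
  | ex x φ ih =>
      obtain ⟨h1, h2⟩ := h
      have sub : φ.bv ⊆ (Formula.ex x φ).bv := by
        intro v; simp only [Formula.bv, Finset.mem_insert]; tauto
      have hx : x ∈ (Formula.ex x φ).bv := by simp [Formula.bv]
      refine ⟨ih (fun v hv w hw => hinj v (sub hv) w (sub hw)) h1, ?_⟩
      simp only [bv_mapVar, Finset.mem_image]
      rintro ⟨u, hu, heq⟩
      exact h2 (hinj x hx u (sub hu) heq.symm ▸ hu)
  | all x φ ih =>
      obtain ⟨h1, h2⟩ := h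
      have sub : φ.bv ⊆ (Formula.all x φ).bv := by
        intro v; simp only [Formula.bv, Finset.mem_insert]; tauto
      have hx : x ∈ (Formula.all x φ).bv := by simp [Formula.bv]
      refine ⟨ih (fun v hv w hw => hinj v (sub hv) w (sub hw)) h1, ?_⟩
      simp only [bv_mapVar, Finset.mem_image]
      rintro ⟨u, hu, heq⟩
      exact h2 (hinj x hx u (sub hu) heq.symm ▸ hu)

@[simp] lemma mapVar_id (φ : Formula) : φ.mapVar id = φ := by
  induction φ <;> simp [Formula.mapVar, *]

lemma mapVar_congr {g g' : ℕ → ℕ} {φ : Formula}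
    (h : ∀ v ∈ φ.fv ∪ φ.bv, g v = g' v) : φ.mapVar g = φ.mapVar g' := by
  induction φ with
  | atom p args =>
      simp only [Formula.mapVar, Formula.atom.injEq, true_and]
      exact List.map_congr_left fun a ha => h a (by simp [Formula.fv, Formula.bv, ha])
  | neg φ ih => exact congrArg _ (ih h)
  | and φ ψ ih1 ih2 =>
      have sub1 : φ.fv ∪ φ.bv ⊆ (Formula.and φ ψ).fv ∪ (Formula.and φ ψ).bv := by
        intro v; simp only [Formula.fv, Formula.bv, Finset.mem_union]; tauto
      have sub2 : ψ.fv ∪ ψ.bv ⊆ (Formula.and φ ψ).fv ∪ (Formula.and φ ψ).bv := by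
        intro v; simp only [Formula.fv, Formula.bv, Finset.mem_union]; tauto
      simp only [Formula.mapVar]
      rw [ih1 (fun v hv => h v (sub1 hv)), ih2 (fun v hv => h v (sub2 hv))]
  | or φ ψ ih1 ih2 =>
      have sub1 : φ.fv ∪ φ.bv ⊆ (Formula.or φ ψ).fv ∪ (Formula.or φ ψ).bv := by
        intro v; simp only [Formula.fv, Formula.bv, Finset.mem_union]; tauto
      have sub2 : ψ.fv ∪ ψ.bv ⊆ (Formula.or φ ψ).fv ∪ (Formula.or φ ψ).bv := by
        intro v; simp only [Formula.fv, Formula.bv, Finset.mem_union]; tauto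
      simp only [Formula.mapVar]
      rw [ih1 (fun v hv => h v (sub1 hv)), ih2 (fun v hv => h v (sub2 hv))]
  | box φ ih => exact congrArg _ (ih h)
  | dia φ ih => exact congrArg _ (ih h)
  | ex x φ ih =>
      have sub : φ.fv ∪ φ.bv ⊆ (Formula.ex x φ).fv ∪ (Formula.ex x φ).bv := by
        intro v
        simp only [Formula.fv, Formula.bv, Finset.mem_union, Finset.mem_erase, Finset.mem_insert]
        by_cases hv : v = x <;> tauto
      have hx : x ∈ (Formula.ex x φ).fv ∪ (Formula.ex x φ).bv := by simp [Formula.bv]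
      simp only [Formula.mapVar]
      rw [ih (fun v hv => h v (sub hv)), h x hx]
  | all x φ ih =>
      have sub : φ.fv ∪ φ.bv ⊆ (Formula.all x φ).fv ∪ (Formula.all x φ).bv := by
        intro v
        simp only [Formula.fv, Formula.bv, Finset.mem_union, Finset.mem_erase, Finset.mem_insert]
        by_cases hv : v = x <;> tauto
      have hx : x ∈ (Formula.all x φ).fv ∪ (Formula.all x φ).bv := by simp [Formula.bv]
      simp only [Formula.mapVar]
      rw [ih (fun v hv => h v (sub hv)), h x hx]

lemma mapVar_comp (g h : ℕ → ℕ) (φ : Formula) :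
    (φ.mapVar h).mapVar g = φ.mapVar (g ∘ h) := by
  induction φ <;> simp [Formula.mapVar, *]

lemma subst_eq_mapVar {y : ℕ} (z : ℕ) {φ : Formula} (hy : y ∉ φ.bv) :
    φ.subst y z = φ.mapVar (fun v => if v = y then z else v) := by
  induction φ with
  | atom p args => simp [Formula.subst, Formula.mapVar]
  | neg φ ih => exact congrArg _ (ih hy)
  | and φ ψ ih1 ih2 =>
      simp only [Formula.bv, Finset.mem_union] at hy
      push_neg at hy
      simp only [Formula.subst, Formula.mapVar]
      rw [ih1 hy.1, ih2 hy.2]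
  | or φ ψ ih1 ih2 =>
      simp only [Formula.bv, Finset.mem_union] at hy
      push_neg at hy
      simp only [Formula.subst, Formula.mapVar]
      rw [ih1 hy.1, ih2 hy.2]
  | box φ ih => exact congrArg _ (ih hy)
  | dia φ ih => exact congrArg _ (ih hy)
  | ex x φ ih =>
      simp only [Formula.bv, Finset.mem_insert] at hy
      push_neg at hy
      simp only [Formula.subst, Formula.mapVar, if_neg (Ne.symm hy.1), if_neg hy.1]
      rw [ih hy.2]
  | all x φ ih =>
      simp only [Formula.bv, Finset.mem_insert] at hy
      push_neg at hy
      simp only [Formula.subst, Formula.mapVar, if_neg (Ne.symm hy.1), if_neg hy.1]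
      rw [ih hy.2]
/-- key renaming lemma: two variable-renamings of a clean formula that agree on the
free variables and keep bound variables separate yield α-equivalent formulas -/
lemma alpha_mapVar (φ : Formula) (g h : ℕ → ℕ)
    (hu : φ.uniqueBinders) (hd : ∀ v ∈ φ.fv, v ∉ φ.bv)
    (hg1 : ∀ v ∈ φ.bv, ∀ w ∈ φ.bv, g v = g w → v = w)
    (hh1 : ∀ v ∈ φ.bv, ∀ w ∈ φ.bv, h v = h w → v = w)
    (hg2 : ∀ v ∈ φ.fv, ∀ w ∈ φ.bv, g v ≠ g w)
    (hh2 : ∀ v ∈ φ.fv, ∀ w ∈ φ.bv, h v ≠ h w)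
    (hgh : ∀ v ∈ φ.fv, g v = h v) :
    AlphaEq (φ.mapVar g) (φ.mapVar h) := by
  induction φ generalizing g h with
  | atom p args =>
      have : args.map g = args.map h :=
        List.map_congr_left fun a ha => hgh a (by simp [Formula.fv, ha])
      simp only [Formula.mapVar, this]
      exact AlphaEq.atom _ _
  | neg φ ih => exact AlphaEq.neg (ih g h hu hd hg1 hh1 hg2 hh2 hgh)
  | and φ ψ ih1 ih2 =>
      obtain ⟨h1, h2, h3⟩ := hu
      have sf1 : φ.fv ⊆ (Formula.and φ ψ).fv := by
        intro v; simp only [Formula.fv, Finset.mem_union]; tauto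
      have sf2 : ψ.fv ⊆ (Formula.and φ ψ).fv := by
        intro v; simp only [Formula.fv, Finset.mem_union]; tauto
      have sb1 : φ.bv ⊆ (Formula.and φ ψ).bv := by
        intro v; simp only [Formula.bv, Finset.mem_union]; tauto
      have sb2 : ψ.bv ⊆ (Formula.and φ ψ).bv := by
        intro v; simp only [Formula.bv, Finset.mem_union]; tauto
      exact AlphaEq.and
        (ih1 g h h1 (fun v hv hb => hd v (sf1 hv) (sb1 hb))
          (fun v hv w hw => hg1 v (sb1 hv) w (sb1 hw))
          (fun v hv w hw => hh1 v (sb1 hv) w (sb1 hw))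
          (fun v hv w hw => hg2 v (sf1 hv) w (sb1 hw))
          (fun v hv w hw => hh2 v (sf1 hv) w (sb1 hw))
          (fun v hv => hgh v (sf1 hv)))
        (ih2 g h h2 (fun v hv hb => hd v (sf2 hv) (sb2 hb))
          (fun v hv w hw => hg1 v (sb2 hv) w (sb2 hw))
          (fun v hv w hw => hh1 v (sb2 hv) w (sb2 hw))
          (fun v hv w hw => hg2 v (sf2 hv) w (sb2 hw))
          (fun v hv w hw => hh2 v (sf2 hv) w (sb2 hw))
          (fun v hv => hgh v (sf2 hv)))
  | or φ ψ ih1 ih2 =>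
      obtain ⟨h1, h2, h3⟩ := hu
      have sf1 : φ.fv ⊆ (Formula.or φ ψ).fv := by
        intro v; simp only [Formula.fv, Finset.mem_union]; tauto
      have sf2 : ψ.fv ⊆ (Formula.or φ ψ).fv := by
        intro v; simp only [Formula.fv, Finset.mem_union]; tauto
      have sb1 : φ.bv ⊆ (Formula.or φ ψ).bv := by
        intro v; simp only [Formula.bv, Finset.mem_union]; tauto
      have sb2 : ψ.bv ⊆ (Formula.or φ ψ).bv := by
        intro v; simp only [Formula.bv, Finset.mem_union]; tauto
      exact AlphaEq.or
        (ih1 g h h1 (fun v hv hb => hd v (sf1 hv) (sb1 hb))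
          (fun v hv w hw => hg1 v (sb1 hv) w (sb1 hw))
          (fun v hv w hw => hh1 v (sb1 hv) w (sb1 hw))
          (fun v hv w hw => hg2 v (sf1 hv) w (sb1 hw))
          (fun v hv w hw => hh2 v (sf1 hv) w (sb1 hw))
          (fun v hv => hgh v (sf1 hv)))
        (ih2 g h h2 (fun v hv hb => hd v (sf2 hv) (sb2 hb))
          (fun v hv w hw => hg1 v (sb2 hv) w (sb2 hw))
          (fun v hv w hw => hh1 v (sb2 hv) w (sb2 hw))
          (fun v hv w hw => hg2 v (sf2 hv) w (sb2 hw))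
          (fun v hv w hw => hh2 v (sf2 hv) w (sb2 hw))
          (fun v hv => hgh v (sf2 hv)))
  | box φ ih => exact AlphaEq.box (ih g h hu hd hg1 hh1 hg2 hh2 hgh)
  | dia φ ih => exact AlphaEq.dia (ih g h hu hd hg1 hh1 hg2 hh2 hgh)
  | ex x φ ih =>
      obtain ⟨h1, h2⟩ := hu
      have hxbv : x ∈ (Formula.ex x φ).bv := by simp [Formula.bv]
      have sbv : φ.bv ⊆ (Formula.ex x φ).bv := by
        intro v; simp only [Formula.bv, Finset.mem_insert]; tauto
      have sfv : ∀ v ∈ φ.fv, v ≠ x → v ∈ (Formula.ex x φ).fv := by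
        intro v hv hvx; simp [Formula.fv, Finset.mem_erase, hvx, hv]
      simp only [Formula.mapVar]
      refine AlphaEq.ex ?_
      intro z hz
      simp only [bv_mapVar, Finset.mem_union] at hz
      push_neg at hz
      have hgx : g x ∉ (φ.mapVar g).bv := by
        rw [bv_mapVar]
        simp only [Finset.mem_image]
        rintro ⟨u, hu, heq⟩
        exact h2 ((hg1 x hxbv u (sbv hu) heq.symm) ▸ hu)
      have hhx : h x ∉ (φ.mapVar h).bv := by
        rw [bv_mapVar]
        simp only [Finset.mem_image]
        rintro ⟨u, hu, heq⟩
        exact h2 ((hh1 x hxbv u (sbv hu) heq.symm) ▸ hu)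
      rw [subst_eq_mapVar z hgx, subst_eq_mapVar z hhx, mapVar_comp, mapVar_comp]
      set g₁ : ℕ → ℕ := (fun v => if v = g x then z else v) ∘ g with hg₁def
      set h₁ : ℕ → ℕ := (fun v => if v = h x then z else v) ∘ h with hh₁def
      have hzg : z ∉ (φ.bv).image g := by
        intro hmem; exact hz.1 (by simpa [bv_mapVar] using hmem)
      have hzh : z ∉ (φ.bv).image h := by
        intro hmem; exact hz.2 (by simpa [bv_mapVar] using hmem)
      have hg₁bv : ∀ w ∈ φ.bv, g₁ w = g w := by
        intro w hw
        simp only [hg₁def, Function.comp_apply]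
        rw [if_neg]
        intro heq
        exact h2 ((hg1 x hxbv w (sbv hw) heq.symm) ▸ hw)
      have hh₁bv : ∀ w ∈ φ.bv, h₁ w = h w := by
        intro w hw
        simp only [hh₁def, Function.comp_apply]
        rw [if_neg]
        intro heq
        exact h2 ((hh1 x hxbv w (sbv hw) heq.symm) ▸ hw)
      apply ih g₁ h₁ h1
      · -- fv φ disjoint bv φ
        intro v hv hb
        by_cases hvx : v = x
        · exact h2 (hvx ▸ hb)
        · exact hd v (sfv v hv hvx) (sbv hb)
      · -- inj g₁ on bv φ
        intro v hv w hw heq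
        rw [hg₁bv v hv, hg₁bv w hw] at heq
        exact hg1 v (sbv hv) w (sbv hw) heq
      · intro v hv w hw heq
        rw [hh₁bv v hv, hh₁bv w hw] at heq
        exact hh1 v (sbv hv) w (sbv hw) heq
      · -- g₁ separates fv from bv
        intro v hv w hw
        rw [hg₁bv w hw]
        by_cases hvx : v = x
        · subst hvx
          have : g₁ v = z := by simp [hg₁def]
          rw [this]
          intro heq
          exact hzg (heq ▸ Finset.mem_image_of_mem g hw)
        · have : g₁ v = g v := by
            simp only [hg₁def, Function.comp_apply]
            rw [if_neg]
            exact hg2 v (sfv v hv hvx) x hxbv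
          rw [this]
          exact hg2 v (sfv v hv hvx) w (sbv hw)
      · intro v hv w hw
        rw [hh₁bv w hw]
        by_cases hvx : v = x
        · subst hvx
          have : h₁ v = z := by simp [hh₁def]
          rw [this]
          intro heq
          exact hzh (heq ▸ Finset.mem_image_of_mem h hw)
        · have : h₁ v = h v := by
            simp only [hh₁def, Function.comp_apply]
            rw [if_neg]
            exact hh2 v (sfv v hv hvx) x hxbv
          rw [this]
          exact hh2 v (sfv v hv hvx) w (sbv hw)
      · -- g₁ = h₁ on fv φ
        intro v hv
        by_cases hvx : v = x
        · subst hvx; simp [hg₁def, hh₁def]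
        · have e1 : g₁ v = g v := by
            simp only [hg₁def, Function.comp_apply]
            rw [if_neg]
            exact hg2 v (sfv v hv hvx) x hxbv
          have e2 : h₁ v = h v := by
            simp only [hh₁def, Function.comp_apply]
            rw [if_neg]
            exact hh2 v (sfv v hv hvx) x hxbv
          rw [e1, e2]
          exact hgh v (sfv v hv hvx)
  | all x φ ih =>
      obtain ⟨h1, h2⟩ := hu
      have hxbv : x ∈ (Formula.all x φ).bv := by simp [Formula.bv]
      have sbv : φ.bv ⊆ (Formula.all x φ).bv := by
        intro v; simp only [Formula.bv, Finset.mem_insert]; tauto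
      have sfv : ∀ v ∈ φ.fv, v ≠ x → v ∈ (Formula.all x φ).fv := by
        intro v hv hvx; simp [Formula.fv, Finset.mem_erase, hvx, hv]
      simp only [Formula.mapVar]
      refine AlphaEq.all ?_
      intro z hz
      simp only [bv_mapVar, Finset.mem_union] at hz
      push_neg at hz
      have hgx : g x ∉ (φ.mapVar g).bv := by
        rw [bv_mapVar]
        simp only [Finset.mem_image]
        rintro ⟨u, hu, heq⟩
        exact h2 ((hg1 x hxbv u (sbv hu) heq.symm) ▸ hu)
      have hhx : h x ∉ (φ.mapVar h).bv := by
        rw [bv_mapVar]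
        simp only [Finset.mem_image]
        rintro ⟨u, hu, heq⟩
        exact h2 ((hh1 x hxbv u (sbv hu) heq.symm) ▸ hu)
      rw [subst_eq_mapVar z hgx, subst_eq_mapVar z hhx, mapVar_comp, mapVar_comp]
      set g₁ : ℕ → ℕ := (fun v => if v = g x then z else v) ∘ g with hg₁def
      set h₁ : ℕ → ℕ := (fun v => if v = h x then z else v) ∘ h with hh₁def
      have hzg : z ∉ (φ.bv).image g := by
        intro hmem; exact hz.1 (by simpa [bv_mapVar] using hmem)
      have hzh : z ∉ (φ.bv).image h := by
        intro hmem; exact hz.2 (by simpa [bv_mapVar] using hmem)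
      have hg₁bv : ∀ w ∈ φ.bv, g₁ w = g w := by
        intro w hw
        simp only [hg₁def, Function.comp_apply]
        rw [if_neg]
        intro heq
        exact h2 ((hg1 x hxbv w (sbv hw) heq.symm) ▸ hw)
      have hh₁bv : ∀ w ∈ φ.bv, h₁ w = h w := by
        intro w hw
        simp only [hh₁def, Function.comp_apply]
        rw [if_neg]
        intro heq
        exact h2 ((hh1 x hxbv w (sbv hw) heq.symm) ▸ hw)
      apply ih g₁ h₁ h1
      · intro v hv hb
        by_cases hvx : v = x
        · exact h2 (hvx ▸ hb)
        · exact hd v (sfv v hv hvx) (sbv hb)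
      · intro v hv w hw heq
        rw [hg₁bv v hv, hg₁bv w hw] at heq
        exact hg1 v (sbv hv) w (sbv hw) heq
      · intro v hv w hw heq
        rw [hh₁bv v hv, hh₁bv w hw] at heq
        exact hh1 v (sbv hv) w (sbv hw) heq
      · intro v hv w hw
        rw [hg₁bv w hw]
        by_cases hvx : v = x
        · subst hvx
          have : g₁ v = z := by simp [hg₁def]
          rw [this]
          intro heq
          exact hzg (heq ▸ Finset.mem_image_of_mem g hw)
        · have : g₁ v = g v := by
            simp only [hg₁def, Function.comp_apply]
            rw [if_neg]
            exact hg2 v (sfv v hv hvx) x hxbv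
          rw [this]
          exact hg2 v (sfv v hv hvx) w (sbv hw)
      · intro v hv w hw
        rw [hh₁bv w hw]
        by_cases hvx : v = x
        · subst hvx
          have : h₁ v = z := by simp [hh₁def]
          rw [this]
          intro heq
          exact hzh (heq ▸ Finset.mem_image_of_mem h hw)
        · have : h₁ v = h v := by
            simp only [hh₁def, Function.comp_apply]
            rw [if_neg]
            exact hh2 v (sfv v hv hvx) x hxbv
          rw [this]
          exact hh2 v (sfv v hv hvx) w (sbv hw)
      · intro v hv
        by_cases hvx : v = x
        · subst hvx; simp [hg₁def, hh₁def]
        · have e1 : g₁ v = g v := by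
            simp only [hg₁def, Function.comp_apply]
            rw [if_neg]
            exact hg2 v (sfv v hv hvx) x hxbv
          have e2 : h₁ v = h v := by
            simp only [hh₁def, Function.comp_apply]
            rw [if_neg]
            exact hh2 v (sfv v hv hvx) x hxbv
          rw [e1, e2]
          exact hgh v (sfv v hv hvx)

/-- α-equivalent formulas have the same skeleton -/
lemma shape_of_alphaEq {φ φ' : Formula} (h : AlphaEq φ φ') : φ.shape = φ'.shape := by
  induction h with
  | atom p args => rfl
  | neg _ ih => exact congrArg Skel.sneg ih
  | and _ _ ih1 ih2 => simp [Formula.shape, ih1, ih2]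
  | or _ _ ih1 ih2 => simp [Formula.shape, ih1, ih2]
  | box _ ih => exact congrArg Skel.sbox ih
  | dia _ ih => exact congrArg Skel.sdia ih
  | ex hsub ih =>
      next x x' φ φ' =>
      have hex : ∃ z, z ∉ φ.bv ∪ φ'.bv := by
        refine ⟨(φ.bv ∪ φ'.bv).sup id + 1, fun hmem => ?_⟩
        have := Finset.le_sup (f := id) hmem
        simp only [id] at this
        omega
      obtain ⟨z, hz⟩ := hex
      have := ih z hz
      simp only [shape_subst] at this
      simp [Formula.shape, this]
  | all hsub ih =>
      next x x' φ φ' =>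
      have hex : ∃ z, z ∉ φ.bv ∪ φ'.bv := by
        refine ⟨(φ.bv ∪ φ'.bv).sup id + 1, fun hmem => ?_⟩
        have := Finset.le_sup (f := id) hmem
        simp only [id] at this
        omega
      obtain ⟨z, hz⟩ := hex
      have := ih z hz
      simp only [shape_subst] at this
      simp [Formula.shape, this]
/-! ### LBF structural lemmas -/

lemma exAllPrefix_cons (x : ℕ) (xs ys : List ℕ) (ψ : Formula) :
    exAllPrefix (x :: xs) ys ψ = .ex x (exAllPrefix xs ys ψ) := rfl

lemma exAllPrefix_nil (ys : List ℕ) (ψ : Formula) :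
    exAllPrefix [] ys ψ = ys.foldr Formula.all ψ := rfl

/-- a formula with the same skeleton as a universal prefix is a universal prefix -/
lemma allPrefix_shape_inv (ψ : Formula) :
    ∀ (ys : List ℕ) (φ' : Formula), φ'.shape = (ys.foldr Formula.all ψ).shape →
      ∃ (ys' : List ℕ) (ψ'' : Formula), φ' = ys'.foldr Formula.all ψ'' ∧ ψ''.shape = ψ.shape := by
  intro ys
  induction ys with
  | nil => exact fun φ' h => ⟨[], φ', rfl, h⟩
  | cons y ys ih =>
      intro φ' h
      simp only [List.foldr, Formula.shape] at h
      cases φ' with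
      | all y' χ =>
          obtain ⟨ys', ψ'', rfl, hs⟩ := ih χ (by simpa [Formula.shape] using h)
          exact ⟨y' :: ys', ψ'', rfl, hs⟩
      | atom p args => simp [Formula.shape] at h
      | neg _ => simp [Formula.shape] at h
      | and _ _ => simp [Formula.shape] at h
      | or _ _ => simp [Formula.shape] at h
      | box _ => simp [Formula.shape] at h
      | dia _ => simp [Formula.shape] at h
      | ex _ _ => simp [Formula.shape] at h

lemma exAllPrefix_shape_inv (ψ : Formula) :
    ∀ (xs ys : List ℕ) (φ' : Formula), φ'.shape = (exAllPrefix xs ys ψ).shape →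
      ∃ (xs' ys' : List ℕ) (ψ'' : Formula),
        φ' = exAllPrefix xs' ys' ψ'' ∧ ψ''.shape = ψ.shape := by
  intro xs
  induction xs with
  | nil =>
      intro ys φ' h
      obtain ⟨ys', ψ'', rfl, hs⟩ := allPrefix_shape_inv ψ ys φ' h
      exact ⟨[], ys', ψ'', rfl, hs⟩
  | cons x xs ih =>
      intro ys φ' h
      rw [exAllPrefix_cons] at h
      simp only [Formula.shape] at h
      cases φ' with
      | ex x' χ =>
          obtain ⟨xs', ys', ψ'', rfl, hs⟩ := ih ys χ (by simpa [Formula.shape] using h)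
          exact ⟨x' :: xs', ys', ψ'', rfl, hs⟩
      | atom p args => simp [Formula.shape] at h
      | neg _ => simp [Formula.shape] at h
      | and _ _ => simp [Formula.shape] at h
      | or _ _ => simp [Formula.shape] at h
      | box _ => simp [Formula.shape] at h
      | dia _ => simp [Formula.shape] at h
      | all _ _ => simp [Formula.shape] at h

/-- membership in LBF only depends on the skeleton of a formula -/
lemma lbf_shape :
    (∀ φ, LBFpsi φ → ∀ φ', φ'.shape = φ.shape → LBFpsi φ') ∧
    (∀ φ, LBFalpha φ → ∀ φ', φ'.shape = φ.shape → LBFalpha φ') := by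
  have M1 : ∀ (a : Formula), LBFpsi a → Prop := fun a _ => True
  constructor
  · intro φ h
    refine LBFpsi.rec (motive_1 := fun φ _ => ∀ φ', φ'.shape = φ.shape → LBFpsi φ')
      (motive_2 := fun φ _ => ∀ φ', φ'.shape = φ.shape → LBFalpha φ')
      ?_ ?_ ?_ ?_ ?_ ?_ ?_ ?_ ?_ ?_ h
    case _ => intro p args φ' h'; cases φ' <;> simp [Formula.shape] at h' ⊢ <;> exact LBFpsi.atom _ _
    case _ =>
      intro p args φ' h'
      cases φ' with
      | neg χ =>
          cases χ <;> simp [Formula.shape] at h' <;> exact LBFpsi.natom _ _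
      | _ => simp [Formula.shape] at h' <;> try exact LBFpsi.atom _ _
    case _ =>
      intro a b _ _ iha ihb φ' h'
      cases φ' <;> simp [Formula.shape] at h'
      exact LBFpsi.and (iha _ h'.1) (ihb _ h'.2)
    case _ =>
      intro a b _ _ iha ihb φ' h'
      cases φ' <;> simp [Formula.shape] at h'
      exact LBFpsi.or (iha _ h'.1) (ihb _ h'.2)
    case _ =>
      intro a _ iha φ' h'
      cases φ' <;> simp [Formula.shape] at h'
      exact LBFpsi.box (iha _ h')
    case _ =>
      intro a _ iha φ' h'
      cases φ' <;> simp [Formula.shape] at h'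
      exact LBFpsi.dia (iha _ h')
    case _ => intro a _ iha φ' h'; exact LBFalpha.psi (iha _ h')
    case _ =>
      intro a b _ _ iha ihb φ' h'
      cases φ' <;> simp [Formula.shape] at h'
      exact LBFalpha.and (iha _ h'.1) (ihb _ h'.2)
    case _ =>
      intro a b _ _ iha ihb φ' h'
      cases φ' <;> simp [Formula.shape] at h'
      exact LBFalpha.or (iha _ h'.1) (ihb _ h'.2)
    case _ =>
      intro xs ys ψ _ ihψ φ' h'
      obtain ⟨xs', ys', ψ'', rfl, hs⟩ := exAllPrefix_shape_inv ψ xs ys φ' h'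
      exact LBFalpha.exAll (ihψ _ hs)
  · intro φ h
    refine LBFalpha.rec (motive_1 := fun φ _ => ∀ φ', φ'.shape = φ.shape → LBFpsi φ')
      (motive_2 := fun φ _ => ∀ φ', φ'.shape = φ.shape → LBFalpha φ')
      ?_ ?_ ?_ ?_ ?_ ?_ ?_ ?_ ?_ ?_ h
    case _ => intro p args φ' h'; cases φ' <;> simp [Formula.shape] at h' ⊢ <;> exact LBFpsi.atom _ _
    case _ =>
      intro p args φ' h'
      cases φ' with
      | neg χ =>
          cases χ <;> simp [Formula.shape] at h' <;> exact LBFpsi.natom _ _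
      | _ => simp [Formula.shape] at h' <;> try exact LBFpsi.atom _ _
    case _ =>
      intro a b _ _ iha ihb φ' h'
      cases φ' <;> simp [Formula.shape] at h'
      exact LBFpsi.and (iha _ h'.1) (ihb _ h'.2)
    case _ =>
      intro a b _ _ iha ihb φ' h'
      cases φ' <;> simp [Formula.shape] at h'
      exact LBFpsi.or (iha _ h'.1) (ihb _ h'.2)
    case _ =>
      intro a _ iha φ' h'
      cases φ' <;> simp [Formula.shape] at h'
      exact LBFpsi.box (iha _ h')
    case _ =>
      intro a _ iha φ' h'
      cases φ' <;> simp [Formula.shape] at h'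
      exact LBFpsi.dia (iha _ h')
    case _ => intro a _ iha φ' h'; exact LBFalpha.psi (iha _ h')
    case _ =>
      intro a b _ _ iha ihb φ' h'
      cases φ' <;> simp [Formula.shape] at h'
      exact LBFalpha.and (iha _ h'.1) (ihb _ h'.2)
    case _ =>
      intro a b _ _ iha ihb φ' h'
      cases φ' <;> simp [Formula.shape] at h'
      exact LBFalpha.or (iha _ h'.1) (ihb _ h'.2)
    case _ =>
      intro xs ys ψ _ ihψ φ' h'
      obtain ⟨xs', ys', ψ'', rfl, hs⟩ := exAllPrefix_shape_inv ψ xs ys φ' h'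
      exact LBFalpha.exAll (ihψ _ hs)

lemma lbfalpha_of_shape {φ φ' : Formula} (h : LBFalpha φ) (hs : φ'.shape = φ.shape) :
    LBFalpha φ' := lbf_shape.2 φ h φ' hs

/-- case analysis on LBF formulas -/
lemma exAllPrefix_nil_cons (y : ℕ) (ys : List ℕ) (ψ : Formula) :
    exAllPrefix [] (y :: ys) ψ = .all y (ys.foldr Formula.all ψ) := rfl

lemma exAllPrefix_nil_nil (ψ : Formula) : exAllPrefix [] [] ψ = ψ := rfl

lemma lbfalpha_cases {φ : Formula} (h : LBFalpha φ) :
    LBFpsi φ ∨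
    (∃ a b, φ = .and a b ∧ LBFalpha a ∧ LBFalpha b) ∨
    (∃ a b, φ = .or a b ∧ LBFalpha a ∧ LBFalpha b) ∨
    (∃ x χ, φ = .ex x χ ∧ LBFalpha χ) ∨
    (∃ (y : ℕ) (ys : List ℕ) (ψ : Formula), φ = .all y (ys.foldr Formula.all ψ) ∧ LBFpsi ψ) := by
  cases h with
  | psi h => exact Or.inl h
  | and h1 h2 => exact Or.inr (Or.inl ⟨_, _, rfl, h1, h2⟩)
  | or h1 h2 => exact Or.inr (Or.inr (Or.inl ⟨_, _, rfl, h1, h2⟩))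
  | exAll h =>
      next xs ys ψ =>
      cases xs with
      | cons x xs' =>
          exact Or.inr (Or.inr (Or.inr (Or.inl
            ⟨x, exAllPrefix xs' ys ψ, exAllPrefix_cons x xs' ys ψ, LBFalpha.exAll h⟩)))
      | nil =>
          cases ys with
          | nil => exact Or.inl h
          | cons y ys' =>
              exact Or.inr (Or.inr (Or.inr (Or.inr
                ⟨y, ys', ψ, exAllPrefix_nil_cons y ys' ψ, h⟩)))

lemma lbfpsi_not_ex {x : ℕ} {χ : Formula} (h : LBFpsi (.ex x χ)) : False := by cases h
lemma lbfpsi_not_all {x : ℕ} {χ : Formula} (h : LBFpsi (.all x χ)) : False := by cases h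

lemma lbf_and_inv {a b : Formula} (h : LBFalpha (.and a b)) : LBFalpha a ∧ LBFalpha b := by
  rcases lbfalpha_cases h with hp | ⟨a', b', he, h1, h2⟩ | ⟨a', b', he, _, _⟩
    | ⟨x, χ, he, _⟩ | ⟨y, ys, ψ, he, _⟩
  · cases hp with
    | and h1 h2 => exact ⟨LBFalpha.psi h1, LBFalpha.psi h2⟩
  · cases he; exact ⟨h1, h2⟩
  · cases he
  · cases he
  · cases he

lemma lbf_or_inv {a b : Formula} (h : LBFalpha (.or a b)) : LBFalpha a ∧ LBFalpha b := by
  rcases lbfalpha_cases h with hp | ⟨a', b', he, _, _⟩ | ⟨a', b', he, h1, h2⟩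
    | ⟨x, χ, he, _⟩ | ⟨y, ys, ψ, he, _⟩
  · cases hp with
    | or h1 h2 => exact ⟨LBFalpha.psi h1, LBFalpha.psi h2⟩
  · cases he
  · cases he; exact ⟨h1, h2⟩
  · cases he
  · cases he

lemma lbf_ex_inv {x : ℕ} {χ : Formula} (h : LBFalpha (.ex x χ)) : LBFalpha χ := by
  rcases lbfalpha_cases h with hp | ⟨a', b', he, _, _⟩ | ⟨a', b', he, _, _⟩
    | ⟨x', χ', he, h1⟩ | ⟨y, ys, ψ, he, _⟩
  · exact absurd hp lbfpsi_not_ex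
  · cases he
  · cases he
  · cases he; exact h1
  · cases he

lemma lbf_all_inv {y : ℕ} {χ : Formula} (h : LBFalpha (.all y χ)) :
    ∃ (ys : List ℕ) (ψ : Formula), χ = ys.foldr Formula.all ψ ∧ LBFpsi ψ := by
  rcases lbfalpha_cases h with hp | ⟨a', b', he, _, _⟩ | ⟨a', b', he, _, _⟩
    | ⟨x', χ', he, _⟩ | ⟨y', ys, ψ, he, hψ⟩
  · exact absurd hp lbfpsi_not_all
  · cases he
  · cases he
  · cases he
  · cases he; exact ⟨ys, ψ, rfl, hψ⟩

lemma lbf_box_inv {χ : Formula} (h : LBFalpha (.box χ)) : LBFalpha χ := by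
  rcases lbfalpha_cases h with hp | ⟨a', b', he, _, _⟩ | ⟨a', b', he, _, _⟩
    | ⟨x', χ', he, _⟩ | ⟨y', ys, ψ, he, _⟩
  · cases hp with | box h1 => exact h1
  · cases he
  · cases he
  · cases he
  · cases he

lemma lbf_dia_inv {χ : Formula} (h : LBFalpha (.dia χ)) : LBFalpha χ := by
  rcases lbfalpha_cases h with hp | ⟨a', b', he, _, _⟩ | ⟨a', b', he, _, _⟩
    | ⟨x', χ', he, _⟩ | ⟨y', ys, ψ, he, _⟩
  · cases hp with | dia h1 => exact h1
  · cases he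
  · cases he
  · cases he
  · cases he

lemma lbf_neg_inv {χ : Formula} (h : LBFalpha (.neg χ)) : ∃ p args, χ = .atom p args := by
  rcases lbfalpha_cases h with hp | ⟨a', b', he, _, _⟩ | ⟨a', b', he, _, _⟩
    | ⟨x', χ', he, _⟩ | ⟨y', ys, ψ, he, _⟩
  · cases hp with | natom p args => exact ⟨p, args, rfl⟩
  · cases he
  · cases he
  · cases he
  · cases he

/-- LBF `ψ`-formulas have no existential quantifier outside modalities -/
lemma lbfpsi_exC {ψ : Formula} (h : LBFpsi ψ) : ψ.shape.exC = 0 := by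
  refine LBFpsi.rec (motive_1 := fun φ _ => φ.shape.exC = 0)
    (motive_2 := fun _ _ => True) ?_ ?_ ?_ ?_ ?_ ?_ ?_ ?_ ?_ ?_ h
  · intro p args; rfl
  · intro p args; rfl
  · intro a b _ _ ih1 ih2; simp [Formula.shape, Skel.exC, ih1, ih2]
  · intro a b _ _ ih1 ih2; simp [Formula.shape, Skel.exC, ih1, ih2]
  · intro a _ _; rfl
  · intro a _ _; rfl
  all_goals intros; trivial

lemma allPrefix_exC {ψ : Formula} (ys : List ℕ) :
    (ys.foldr Formula.all ψ).shape.exC = ψ.shape.exC := by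
  induction ys with
  | nil => rfl
  | cons y ys ih => simp [Formula.shape, Skel.exC, ih]

lemma allPrefix_mrank {ψ : Formula} (ys : List ℕ) :
    (ys.foldr Formula.all ψ).shape.mrank = ψ.shape.mrank := by
  induction ys with
  | nil => rfl
  | cons y ys ih => simp [Formula.shape, Skel.mrank, ih]

/-- comps equations -/
@[simp] lemma comps_atom (p : ℕ) (args : List ℕ) :
    (Formula.atom p args).comps = {Formula.atom p args} := rfl
@[simp] lemma comps_neg (φ : Formula) : (Formula.neg φ).comps = {Formula.neg φ} := rfl
@[simp] lemma comps_box (φ : Formula) : (Formula.box φ).comps = {Formula.box φ} := rfl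
@[simp] lemma comps_dia (φ : Formula) : (Formula.dia φ).comps = {Formula.dia φ} := rfl
@[simp] lemma comps_and (φ ψ : Formula) :
    (Formula.and φ ψ).comps = φ.comps ∪ ψ.comps := rfl
@[simp] lemma comps_or (φ ψ : Formula) :
    (Formula.or φ ψ).comps = φ.comps ∪ ψ.comps := rfl
@[simp] lemma comps_ex (x : ℕ) (φ : Formula) :
    (Formula.ex x φ).comps = insert (Formula.ex x φ) φ.comps := rfl
@[simp] lemma comps_all (x : ℕ) (φ : Formula) :
    (Formula.all x φ).comps = insert (Formula.all x φ) φ.comps := rfl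

/-- components of an LBF `ψ`-formula are modules -/
lemma lbfpsi_comps {ψ : Formula} (h : LBFpsi ψ) :
    ∀ β ∈ ψ.comps, β.isModuleB = true := by
  refine LBFpsi.rec (motive_1 := fun φ _ => ∀ β ∈ φ.comps, β.isModuleB = true)
    (motive_2 := fun _ _ => True) ?_ ?_ ?_ ?_ ?_ ?_ ?_ ?_ ?_ ?_ h
  · intro p args β hβ; simp at hβ; subst hβ; rfl
  · intro p args β hβ; simp at hβ; subst hβ; rfl
  · intro a b _ _ ih1 ih2 β hβ
    rw [comps_and, Finset.mem_union] at hβ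
    rcases hβ with h' | h'
    · exact ih1 β h'
    · exact ih2 β h'
  · intro a b _ _ ih1 ih2 β hβ
    rw [comps_or, Finset.mem_union] at hβ
    rcases hβ with h' | h'
    · exact ih1 β h'
    · exact ih2 β h'
  · intro a _ _ β hβ; simp at hβ; subst hβ; rfl
  · intro a _ _ β hβ; simp at hβ; subst hβ; rfl
  all_goals intros; trivial

/-- components of a universal prefix over an LBF `ψ`-formula are modules or universals -/
lemma allPrefix_comps {ψ : Formula} (h : LBFpsi ψ) (ys : List ℕ) :
    ∀ β ∈ (ys.foldr Formula.all ψ).comps,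
      β.isModuleB = true ∨ ∃ (x : ℕ) (γ : Formula), β = .all x γ := by
  induction ys with
  | nil => exact fun β hβ => Or.inl (lbfpsi_comps h β hβ)
  | cons y ys ih =>
      intro β hβ
      simp only [List.foldr, comps_all, Finset.mem_insert] at hβ
      rcases hβ with rfl | hβ
      · exact Or.inr ⟨y, _, rfl⟩
      · exact ih β hβ

/-- an LBF formula that is not a conjunction, disjunction, existential or universal
formula is a module -/
lemma lbf_module {φ : Formula} (h : LBFalpha φ)
    (h1 : ∀ a b, φ ≠ .and a b) (h2 : ∀ a b, φ ≠ .or a b)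
    (h3 : ∀ x χ, φ ≠ .ex x χ) (h4 : ∀ x χ, φ ≠ .all x χ) :
    φ.isModuleB = true := by
  cases φ with
  | atom p args => rfl
  | neg χ =>
      obtain ⟨p, args, rfl⟩ := lbf_neg_inv h
      rfl
  | and a b => exact absurd rfl (h1 a b)
  | or a b => exact absurd rfl (h2 a b)
  | box χ => rfl
  | dia χ => rfl
  | ex x χ => exact absurd rfl (h3 x χ)
  | all x χ => exact absurd rfl (h4 x χ)
/-! ### CleanSet helpers -/

lemma cleanSet_of_mem {Γ : Finset Formula}
    (h1 : ∀ φ ∈ Γ, φ.uniqueBinders)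
    (h2 : ∀ φ ∈ Γ, ∀ ψ ∈ Γ, ∀ v, v ∈ φ.fv → v ∉ ψ.bv)
    (h3 : ∀ φ ∈ Γ, ∀ ψ ∈ Γ, φ ≠ ψ → Disjoint φ.bv ψ.bv) : CleanSet Γ := by
  refine ⟨h1, ?_, h3⟩
  rw [Finset.disjoint_left]
  intro v hv hv'
  rw [Finset.mem_sup] at hv hv'
  obtain ⟨φ, hφ, hvφ⟩ := hv
  obtain ⟨ψ, hψ, hvψ⟩ := hv'
  exact h2 φ hφ ψ hψ v hvφ hvψ

lemma CleanSet.uB {Γ : Finset Formula} (h : CleanSet Γ) {φ : Formula} (hφ : φ ∈ Γ) :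
    φ.uniqueBinders := h.1 φ hφ

lemma CleanSet.fv_bv {Γ : Finset Formula} (h : CleanSet Γ) {φ ψ : Formula}
    (hφ : φ ∈ Γ) (hψ : ψ ∈ Γ) {v : ℕ} (hv : v ∈ φ.fv) : v ∉ ψ.bv := by
  intro hv'
  exact Finset.disjoint_left.mp h.2.1
    (Finset.mem_sup.mpr ⟨φ, hφ, hv⟩) (Finset.mem_sup.mpr ⟨ψ, hψ, hv'⟩)

lemma CleanSet.pairBv {Γ : Finset Formula} (h : CleanSet Γ) {φ ψ : Formula}
    (hφ : φ ∈ Γ) (hψ : ψ ∈ Γ) (hne : φ ≠ ψ) {v : ℕ} (hv : v ∈ φ.bv) : v ∉ ψ.bv :=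
  fun hv' => Finset.disjoint_left.mp (h.2.2 φ hφ ψ hψ hne) hv hv'

lemma CleanSet.cleanMem {Γ : Finset Formula} (h : CleanSet Γ) {φ : Formula} (hφ : φ ∈ Γ) :
    Formula.Clean φ := by
  refine ⟨h.uB hφ, Finset.disjoint_left.mpr fun {v} hv => h.fv_bv hφ hφ hv⟩

/-- generic preservation of cleanliness for rules that replace a formula `χ0 ∈ Γ` by a
set `Δ` of new formulas whose free variables may additionally use `E` -/
lemma cleanSet_step {Γ Δ : Finset Formula} {χ0 : Formula} {E : Finset ℕ}
    (hc : CleanSet Γ) (h0 : χ0 ∈ Γ)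
    (huB : ∀ δ ∈ Δ, δ.uniqueBinders)
    (hfv : ∀ δ ∈ Δ, δ.fv ⊆ χ0.fv ∪ E)
    (hbv : ∀ δ ∈ Δ, δ.bv ⊆ χ0.bv)
    (hE : ∀ v ∈ E, v ∈ χ0.bv ∧ ∀ δ ∈ Δ, v ∉ δ.bv)
    (hpair : ∀ δ ∈ Δ, ∀ δ' ∈ Δ, δ ≠ δ' → Disjoint δ.bv δ'.bv) :
    CleanSet ((Γ.erase χ0) ∪ Δ) ∧
    (∀ v, v ∉ Γ.sup Formula.bv → v ∉ ((Γ.erase χ0) ∪ Δ).sup Formula.bv) ∧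
    (∀ v ∈ E, v ∉ ((Γ.erase χ0) ∪ Δ).sup Formula.bv) := by
  have hbv_new : ∀ α ∈ (Γ.erase χ0) ∪ Δ, ∀ v ∈ α.bv, v ∈ Γ.sup Formula.bv := by
    intro α hα v hv
    rcases Finset.mem_union.mp hα with hα | hα
    · exact Finset.mem_sup.mpr ⟨α, Finset.mem_of_mem_erase hα, hv⟩
    · exact Finset.mem_sup.mpr ⟨χ0, h0, hbv α hα hv⟩
  have hdisj : ∀ β ∈ (Γ.erase χ0) ∪ Δ, ∀ v ∈ E, v ∉ β.bv := by
    intro β hβ v hv hv'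
    rcases Finset.mem_union.mp hβ with hβ | hβ
    · exact hc.pairBv h0 (Finset.mem_of_mem_erase hβ)
        (Ne.symm (Finset.ne_of_mem_erase hβ)) (hE v hv).1 hv'
    · exact (hE v hv).2 β hβ hv'
  refine ⟨cleanSet_of_mem ?_ ?_ ?_, ?_, ?_⟩
  · intro α hα
    rcases Finset.mem_union.mp hα with hα | hα
    · exact hc.uB (Finset.mem_of_mem_erase hα)
    · exact huB α hα
  · intro α hα β hβ v hvf hvb
    have hvb' : v ∈ Γ.sup Formula.bv := hbv_new β hβ v hvb
    rcases Finset.mem_union.mp hα with hα | hα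
    · exact Finset.disjoint_left.mp hc.2.1
        (Finset.mem_sup.mpr ⟨α, Finset.mem_of_mem_erase hα, hvf⟩) hvb'
    · rcases Finset.mem_union.mp (hfv α hα hvf) with h | h
      · exact Finset.disjoint_left.mp hc.2.1 (Finset.mem_sup.mpr ⟨χ0, h0, h⟩) hvb'
      · exact hdisj β hβ v h hvb
  · intro α hα β hβ hne
    rcases Finset.mem_union.mp hα with hα | hα
    · rcases Finset.mem_union.mp hβ with hβ | hβ
      · exact hc.2.2 α (Finset.mem_of_mem_erase hα) β (Finset.mem_of_mem_erase hβ) hne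
      · refine Finset.disjoint_left.mpr fun {v} hv hv' => ?_
        exact hc.pairBv (Finset.mem_of_mem_erase hα) h0 (Finset.ne_of_mem_erase hα)
          hv (hbv β hβ hv')
    · rcases Finset.mem_union.mp hβ with hβ | hβ
      · refine Finset.disjoint_left.mpr fun {v} hv hv' => ?_
        exact hc.pairBv (Finset.mem_of_mem_erase hβ) h0 (Finset.ne_of_mem_erase hβ)
          hv' (hbv α hα hv)
      · exact hpair α hα β hβ hne
  · intro v hv hv'
    rw [Finset.mem_sup] at hv'
    obtain ⟨α, hα, hvα⟩ := hv'
    exact hv (hbv_new α hα v hvα)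
  · intro v hv hv'
    rw [Finset.mem_sup] at hv'
    obtain ⟨α, hα, hvα⟩ := hv'
    exact hdisj α hα v hv hvα

lemma cleanSet_subset {Γ Δ : Finset Formula} (h : Δ ⊆ Γ) (hc : CleanSet Γ) : CleanSet Δ :=
  cleanSet_of_mem (fun φ hφ => hc.uB (h hφ))
    (fun φ hφ ψ hψ v hv => hc.fv_bv (h hφ) (h hψ) hv)
    (fun φ hφ ψ hψ hne => hc.2.2 φ (h hφ) ψ (h hψ) hne)

/-! ### diaBodies / boxBodies -/

lemma mem_diaBodies {Γ : Finset Formula} {ψ : Formula} :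
    ψ ∈ diaBodies Γ ↔ Formula.dia ψ ∈ Γ := by
  simp only [diaBodies, List.mem_filterMap, Finset.mem_toList]
  constructor
  · rintro ⟨φ, hφ, h⟩
    cases φ <;> simp at h
    subst h; exact hφ
  · intro h; exact ⟨Formula.dia ψ, h, rfl⟩

lemma mem_boxBodies {Γ : Finset Formula} {ψ : Formula} :
    ψ ∈ boxBodies Γ ↔ Formula.box ψ ∈ Γ := by
  simp only [boxBodies, List.mem_toFinset, List.mem_filterMap, Finset.mem_toList]
  constructor
  · rintro ⟨φ, hφ, h⟩
    cases φ <;> simp at h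
    subst h; exact hφ
  · intro h; exact ⟨Formula.box ψ, h, rfl⟩

lemma diaBodies_ne_nil {Γ : Finset Formula} {ψ : Formula} (h : Formula.dia ψ ∈ Γ) :
    diaBodies Γ ≠ [] := by
  intro hnil
  have := mem_diaBodies.mpr h
  rw [hnil] at this
  exact List.not_mem_nil this
/-! ### invariant preservation -/

/-- the node invariant: clean and all formulas in LBF -/
def NInv (n : Node) : Prop := NodeClean n ∧ ∀ φ ∈ n.Γ, LBFalpha φ

lemma fv_and_left {a b : Formula} : a.fv ⊆ (Formula.and a b).fv := by
  intro v; simp only [Formula.fv, Finset.mem_union]; tauto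
lemma fv_and_right {a b : Formula} : b.fv ⊆ (Formula.and a b).fv := by
  intro v; simp only [Formula.fv, Finset.mem_union]; tauto
lemma bv_and_left {a b : Formula} : a.bv ⊆ (Formula.and a b).bv := by
  intro v; simp only [Formula.bv, Finset.mem_union]; tauto
lemma bv_and_right {a b : Formula} : b.bv ⊆ (Formula.and a b).bv := by
  intro v; simp only [Formula.bv, Finset.mem_union]; tauto
lemma fv_or_left {a b : Formula} : a.fv ⊆ (Formula.or a b).fv := by
  intro v; simp only [Formula.fv, Finset.mem_union]; tauto
lemma fv_or_right {a b : Formula} : b.fv ⊆ (Formula.or a b).fv := by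
  intro v; simp only [Formula.fv, Finset.mem_union]; tauto
lemma bv_or_left {a b : Formula} : a.bv ⊆ (Formula.or a b).bv := by
  intro v; simp only [Formula.bv, Finset.mem_union]; tauto
lemma bv_or_right {a b : Formula} : b.bv ⊆ (Formula.or a b).bv := by
  intro v; simp only [Formula.bv, Finset.mem_union]; tauto

lemma insert2_eq_union {φ ψ : Formula} {S : Finset Formula} :
    insert φ (insert ψ S) = S ∪ {φ, ψ} := by
  ext a; simp

lemma insert_eq_union' {φ : Formula} {S : Finset Formula} :
    insert φ S = S ∪ {φ} := by
  ext a; simp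

lemma step_inv {n : Node} {cs : List Node} (hs : Step n cs) (hI : NInv n) :
    ∀ c ∈ cs, NInv c := by
  obtain ⟨⟨hcl, hσ⟩, hlbf⟩ := hI
  cases hs with
  | @and w Γ σ φ ψ h =>
      intro c hc
      simp only [List.mem_singleton] at hc
      subst hc
      have huB : (Formula.and φ ψ).uniqueBinders := hcl.uB h
      obtain ⟨h1, h2, h3⟩ := huB
      have key := cleanSet_step (Δ := {φ, ψ}) (E := ∅) hcl h
        (by intro δ hδ; rcases Finset.mem_insert.mp hδ with rfl | hδ
            · exact h1
            · rw [Finset.mem_singleton] at hδ; subst hδ; exact h2)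
        (by intro δ hδ; rcases Finset.mem_insert.mp hδ with rfl | hδ
            · exact fv_and_left.trans Finset.subset_union_left
            · rw [Finset.mem_singleton] at hδ; subst hδ
              exact fv_and_right.trans Finset.subset_union_left)
        (by intro δ hδ; rcases Finset.mem_insert.mp hδ with rfl | hδ
            · exact bv_and_left
            · rw [Finset.mem_singleton] at hδ; subst hδ; exact bv_and_right)
        (by intro v hv; simp at hv)
        (by intro δ hδ δ' hδ' hne
            simp only [Finset.mem_insert, Finset.mem_singleton] at hδ hδ'
            rcases hδ with rfl | rfl <;> rcases hδ' with rfl | rfl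
            · exact absurd rfl hne
            · exact h3
            · exact h3.symm
            · exact absurd rfl hne)
      rw [← insert2_eq_union] at key
      refine ⟨⟨key.1, fun v hv => key.2.1 v (hσ v hv)⟩, ?_⟩
      intro χ hχ
      rcases Finset.mem_insert.mp hχ with rfl | hχ
      · exact (lbf_and_inv (hlbf _ h)).1
      rcases Finset.mem_insert.mp hχ with rfl | hχ
      · exact (lbf_and_inv (hlbf _ h)).2
      · exact hlbf χ (Finset.mem_of_mem_erase hχ)
  | @orL w Γ σ φ ψ h =>
      intro c hc
      simp only [List.mem_singleton] at hc
      subst hc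
      have huB : (Formula.or φ ψ).uniqueBinders := hcl.uB h
      obtain ⟨h1, h2, h3⟩ := huB
      have key := cleanSet_step (Δ := {φ}) (E := ∅) hcl h
        (by intro δ hδ; rw [Finset.mem_singleton] at hδ; subst hδ; exact h1)
        (by intro δ hδ; rw [Finset.mem_singleton] at hδ; subst hδ
            exact fv_or_left.trans Finset.subset_union_left)
        (by intro δ hδ; rw [Finset.mem_singleton] at hδ; subst hδ; exact bv_or_left)
        (by intro v hv; simp at hv)
        (by intro δ hδ δ' hδ' hne
            rw [Finset.mem_singleton] at hδ hδ'; subst hδ; subst hδ'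
            exact absurd rfl hne)
      rw [← insert_eq_union'] at key
      refine ⟨⟨key.1, fun v hv => key.2.1 v (hσ v hv)⟩, ?_⟩
      intro χ hχ
      rcases Finset.mem_insert.mp hχ with rfl | hχ
      · exact (lbf_or_inv (hlbf _ h)).1
      · exact hlbf χ (Finset.mem_of_mem_erase hχ)
  | @orR w Γ σ φ ψ h =>
      intro c hc
      simp only [List.mem_singleton] at hc
      subst hc
      have huB : (Formula.or φ ψ).uniqueBinders := hcl.uB h
      obtain ⟨h1, h2, h3⟩ := huB
      have key := cleanSet_step (Δ := {ψ}) (E := ∅) hcl h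
        (by intro δ hδ; rw [Finset.mem_singleton] at hδ; subst hδ; exact h2)
        (by intro δ hδ; rw [Finset.mem_singleton] at hδ; subst hδ
            exact fv_or_right.trans Finset.subset_union_left)
        (by intro δ hδ; rw [Finset.mem_singleton] at hδ; subst hδ; exact bv_or_right)
        (by intro v hv; simp at hv)
        (by intro δ hδ δ' hδ' hne
            rw [Finset.mem_singleton] at hδ hδ'; subst hδ; subst hδ'
            exact absurd rfl hne)
      rw [← insert_eq_union'] at key
      refine ⟨⟨key.1, fun v hv => key.2.1 v (hσ v hv)⟩, ?_⟩
      intro χ hχ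
      rcases Finset.mem_insert.mp hχ with rfl | hχ
      · exact (lbf_or_inv (hlbf _ h)).2
      · exact hlbf χ (Finset.mem_of_mem_erase hχ)
  | @exis w Γ σ x φ h =>
      intro c hc
      simp only [List.mem_singleton] at hc
      subst hc
      have huB : (Formula.ex x φ).uniqueBinders := hcl.uB h
      obtain ⟨h1, h2⟩ := huB
      have hfvsub : φ.fv ⊆ (Formula.ex x φ).fv ∪ {x} := by
        intro v hv
        simp only [Formula.fv, Finset.mem_union, Finset.mem_erase, Finset.mem_singleton]
        by_cases hvx : v = x <;> tauto
      have hbvsub : φ.bv ⊆ (Formula.ex x φ).bv := by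
        intro v; simp only [Formula.bv, Finset.mem_insert]; tauto
      have key := cleanSet_step (Δ := {φ}) (E := {x}) hcl h
        (by intro δ hδ; rw [Finset.mem_singleton] at hδ; subst hδ; exact h1)
        (by intro δ hδ; rw [Finset.mem_singleton] at hδ; subst hδ; exact hfvsub)
        (by intro δ hδ; rw [Finset.mem_singleton] at hδ; subst hδ; exact hbvsub)
        (by intro v hv
            rw [Finset.mem_singleton] at hv; subst hv
            refine ⟨by simp [Formula.bv], ?_⟩
            intro δ hδ
            rw [Finset.mem_singleton] at hδ; subst hδ
            exact h2)
        (by intro δ hδ δ' hδ' hne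
            rw [Finset.mem_singleton] at hδ hδ'; subst hδ; subst hδ'
            exact absurd rfl hne)
      rw [← insert_eq_union'] at key
      refine ⟨⟨key.1, ?_⟩, ?_⟩
      · intro v hv
        rcases Finset.mem_insert.mp hv with rfl | hv
        · exact key.2.2 v (Finset.mem_singleton_self v)
        · exact key.2.1 v (hσ v hv)
      · intro χ hχ
        rcases Finset.mem_insert.mp hχ with rfl | hχ
        · exact lbf_ex_inv (hlbf _ h)
        · exact hlbf χ (Finset.mem_of_mem_erase hχ)
  | @alls w Γ σ y φ f h hsafe hα hclean hσ' =>
      intro c hc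
      simp only [List.mem_singleton] at hc
      subst hc
      refine ⟨⟨hclean, hσ'⟩, ?_⟩
      intro χ hχ
      rcases Finset.mem_union.mp hχ with hχ | hχ
      · exact hlbf χ (Finset.mem_of_mem_erase hχ)
      · obtain ⟨z, hz, rfl⟩ := Finset.mem_image.mp hχ
        have hlbf_all : LBFalpha (Formula.all y φ) := hlbf _ h
        obtain ⟨ys, ψ, rfl, hψ⟩ := lbf_all_inv hlbf_all
        have hφ : LBFalpha (ys.foldr Formula.all ψ) := by
          cases ys with
          | nil => exact LBFalpha.psi hψ
          | cons y' ys' => exact LBFalpha.exAll (xs := []) (ys := y' :: ys') hψ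
        have hsubst : LBFalpha ((ys.foldr Formula.all ψ).subst y z) :=
          lbfalpha_of_shape hφ (shape_subst _ _ _)
        exact lbfalpha_of_shape hsubst (shape_of_alphaEq (hα z hz))
  | @diam w Γ σ hmod hne =>
      intro c hc
      simp only [List.mem_map] at hc
      obtain ⟨⟨i, ψ⟩, hmem, rfl⟩ := hc
      have hψ : ψ ∈ diaBodies Γ := by
        exact (List.of_mem_zip hmem).2
      have hψΓ : Formula.dia ψ ∈ Γ := mem_diaBodies.mp hψ
      -- the new formula set
      have hmem_new : ∀ χ ∈ insert ψ (boxBodies Γ),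
          (χ = ψ ∧ Formula.dia ψ ∈ Γ) ∨ Formula.box χ ∈ Γ := by
        intro χ hχ
        rcases Finset.mem_insert.mp hχ with rfl | hχ
        · exact Or.inl ⟨rfl, hψΓ⟩
        · exact Or.inr (mem_boxBodies.mp hχ)
      have parent : ∀ χ ∈ insert ψ (boxBodies Γ), ∃ π ∈ Γ,
          χ.fv = π.fv ∧ χ.bv = π.bv ∧ (χ.uniqueBinders → True) ∧
          ((π = Formula.dia χ) ∨ (π = Formula.box χ)) := by
        intro χ hχ
        rcases hmem_new χ hχ with ⟨rfl, hd⟩ | hb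
        · exact ⟨Formula.dia χ, hd, rfl, rfl, fun _ => trivial, Or.inl rfl⟩
        · exact ⟨Formula.box χ, hb, rfl, rfl, fun _ => trivial, Or.inr rfl⟩
      constructor
      constructor
      · -- CleanSet
        apply cleanSet_of_mem
        · intro χ hχ
          obtain ⟨π, hπ, _, _, _, hcase⟩ := parent χ hχ
          have := hcl.uB hπ
          rcases hcase with rfl | rfl <;> exact this
        · intro α hα β hβ v hvf hvb
          obtain ⟨πa, hπa, hfa, hba, _, _⟩ := parent α hα
          obtain ⟨πb, hπb, hfb, hbb, _, _⟩ := parent β hβ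
          rw [hfa] at hvf
          rw [hbb] at hvb
          exact hcl.fv_bv hπa hπb hvf hvb
        · intro α hα β hβ hne
          obtain ⟨πa, hπa, hfa, hba, _, hca⟩ := parent α hα
          obtain ⟨πb, hπb, hfb, hbb, _, hcb⟩ := parent β hβ
          have hπne : πa ≠ πb := by
            intro hEq
            rcases hca with rfl | rfl <;> rcases hcb with rfl | rfl <;>
              first
                | (injection hEq with h'; exact hne h')
                | exact absurd hEq (by simp)
          refine Finset.disjoint_left.mpr fun {v} hv hv' => ?_
          rw [hba] at hv
          rw [hbb] at hv'
          exact hcl.pairBv hπa hπb hπne hv hv'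
      · -- σ condition
        intro v hv hv'
        rw [Finset.mem_sup] at hv'
        obtain ⟨χ, hχ, hvχ⟩ := hv'
        obtain ⟨π, hπ, _, hb, _, _⟩ := parent χ hχ
        rw [hb] at hvχ
        exact hσ v hv (Finset.mem_sup.mpr ⟨π, hπ, hvχ⟩)
      · -- LBF
        intro χ hχ
        rcases hmem_new χ hχ with ⟨rfl, hd⟩ | hb
        · exact lbf_dia_inv (hlbf _ hd)
        · exact lbf_box_inv (hlbf _ hb)
  | @fin w Γ σ hmod hnd hbox =>
      intro c hc
      simp only [List.mem_singleton] at hc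
      subst hc
      have hsub : Γ.filter (fun φ => φ.isLiteralB = true) ⊆ Γ := Finset.filter_subset _ _
      refine ⟨⟨cleanSet_subset hsub hcl, ?_⟩, fun χ hχ => hlbf χ (hsub hχ)⟩
      intro v hv hv'
      rw [Finset.mem_sup] at hv'
      obtain ⟨χ, hχ, hvχ⟩ := hv'
      exact hσ v hv (Finset.mem_sup.mpr ⟨χ, hsub hχ, hvχ⟩)
/-! ### termination measures -/

noncomputable def muM (n : Node) : ℕ := n.Γ.sup (fun φ => φ.shape.mrank)
noncomputable def muE (n : Node) : ℕ := n.Γ.sum (fun φ => φ.shape.exC)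
noncomputable def muV (n : Node) : ℕ := n.Γ.sum (fun φ => φ.shape.gval n.σ.card)

/-- the termination order on nodes -/
def NR (c n : Node) : Prop :=
  Prod.Lex (· < ·) (Prod.Lex (· < ·) (· < ·))
    (muM c, muE c, muV c) (muM n, muE n, muV n)

lemma NR_wf : WellFounded NR := by
  have h : WellFounded (Prod.Lex (· < · : ℕ→ℕ→Prop)
      (Prod.Lex (· < · : ℕ→ℕ→Prop) (· < · : ℕ→ℕ→Prop))) :=
    (Nat.lt_wfRel.wf).prod_lex ((Nat.lt_wfRel.wf).prod_lex (Nat.lt_wfRel.wf))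
  exact InvImage.wf (fun n => (muM n, muE n, muV n)) h

lemma NR_of {c n : Node} (hm : muM c ≤ muM n)
    (h : muM c < muM n ∨ (muE c ≤ muE n ∧ (muE c < muE n ∨ muV c < muV n))) :
    NR c n := by
  unfold NR
  rcases lt_or_eq_of_le hm with h' | h'
  · exact Prod.Lex.left _ _ h'
  · rcases h with h | ⟨he, h⟩
    · exact Prod.Lex.left _ _ h
    · rw [h']
      refine Prod.Lex.right _ ?_
      rcases lt_or_eq_of_le he with h'' | h''
      · exact Prod.Lex.left _ _ h''
      · rw [h'']
        refine Prod.Lex.right _ ?_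
        rcases h with h | h
        · omega
        · exact h

lemma sum_insert_le' (f : Formula → ℕ) (a : Formula) (s : Finset Formula) :
    (insert a s).sum f ≤ f a + s.sum f := by
  by_cases h : a ∈ s
  · rw [Finset.insert_eq_self.mpr h]; omega
  · rw [Finset.sum_insert h]

lemma sum_union_le' (f : Formula → ℕ) (s t : Finset Formula) :
    (s ∪ t).sum f ≤ s.sum f + t.sum f := by
  induction s using Finset.induction_on with
  | empty => simp
  | insert a s' h ih =>
      rw [Finset.insert_union, Finset.sum_insert h]
      calc (insert a (s' ∪ t)).sum f ≤ f a + (s' ∪ t).sum f := sum_insert_le' f a _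
      _ ≤ f a + (s'.sum f + t.sum f) := Nat.add_le_add_left ih _
      _ = f a + s'.sum f + t.sum f := by ring

lemma sum_image_le' (g : Formula → ℕ) (f : ℕ → Formula) (s : Finset ℕ) :
    (s.image f).sum g ≤ s.sum (fun z => g (f z)) := by
  induction s using Finset.induction_on with
  | empty => simp
  | insert a s' h ih =>
      rw [Finset.image_insert, Finset.sum_insert h]
      calc (insert (f a) (s'.image f)).sum g ≤ g (f a) + (s'.image f).sum g :=
            sum_insert_le' g _ _
      _ ≤ g (f a) + s'.sum (fun z => g (f z)) := Nat.add_le_add_left ih _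

lemma block_ne {N z z' w w' : ℕ} (hw : w ≤ N) (hw' : w' ≤ N) (hne : z ≠ z') :
    N + 1 + z * (N + 1) + w ≠ N + 1 + z' * (N + 1) + w' := by
  rcases Nat.lt_or_ge z z' with h | h
  · have h2 : (z + 1) * (N + 1) ≤ z' * (N + 1) := Nat.mul_le_mul_right _ h
    have h3 : (z + 1) * (N + 1) = z * (N + 1) + (N + 1) := by ring
    omega
  · have hlt : z' < z := lt_of_le_of_ne h (Ne.symm hne)
    have h2 : (z' + 1) * (N + 1) ≤ z * (N + 1) := Nat.mul_le_mul_right _ hlt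
    have h3 : (z' + 1) * (N + 1) = z' * (N + 1) + (N + 1) := by ring
    omega

/-- variant of `cleanSet_step` where the new formulas have completely fresh
bound variables -/
lemma cleanSet_step_fresh {Γ Δ : Finset Formula} {χ0 : Formula} {E : Finset ℕ}
    (hc : CleanSet Γ) (h0 : χ0 ∈ Γ)
    (huB : ∀ δ ∈ Δ, δ.uniqueBinders)
    (hfv : ∀ δ ∈ Δ, δ.fv ⊆ χ0.fv ∪ E)
    (hbvf : ∀ δ ∈ Δ, ∀ v ∈ δ.bv,
      v ∉ Γ.sup Formula.bv ∧ v ∉ Γ.sup Formula.fv ∧ v ∉ E)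
    (hpair : ∀ δ ∈ Δ, ∀ δ' ∈ Δ, δ ≠ δ' → Disjoint δ.bv δ'.bv)
    (hE : ∀ v ∈ E, v ∉ Γ.sup Formula.bv) :
    CleanSet ((Γ.erase χ0) ∪ Δ) ∧
    (∀ v ∈ E, v ∉ ((Γ.erase χ0) ∪ Δ).sup Formula.bv) := by
  constructor
  · apply cleanSet_of_mem
    · intro α hα
      rcases Finset.mem_union.mp hα with hα | hα
      · exact hc.uB (Finset.mem_of_mem_erase hα)
      · exact huB α hα
    · intro α hα β hβ v hvf hvb
      rcases Finset.mem_union.mp hβ with hβ | hβ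
      · -- v ∈ bv β, β old
        have hvb' : v ∈ Γ.sup Formula.bv :=
          Finset.mem_sup.mpr ⟨β, Finset.mem_of_mem_erase hβ, hvb⟩
        rcases Finset.mem_union.mp hα with hα | hα
        · exact hc.fv_bv (Finset.mem_of_mem_erase hα) (Finset.mem_of_mem_erase hβ) hvf hvb
        · rcases Finset.mem_union.mp (hfv α hα hvf) with h | h
          · exact Finset.disjoint_left.mp hc.2.1 (Finset.mem_sup.mpr ⟨χ0, h0, h⟩) hvb'
          · exact hE v h hvb'
      · -- β new, v fresh
        obtain ⟨_, h2, h3⟩ := hbvf β hβ v hvb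
        rcases Finset.mem_union.mp hα with hα | hα
        · exact h2 (Finset.mem_sup.mpr ⟨α, Finset.mem_of_mem_erase hα, hvf⟩)
        · rcases Finset.mem_union.mp (hfv α hα hvf) with h | h
          · exact h2 (Finset.mem_sup.mpr ⟨χ0, h0, h⟩)
          · exact h3 h
    · intro α hα β hβ hne
      rcases Finset.mem_union.mp hα with hα | hα <;> rcases Finset.mem_union.mp hβ with hβ | hβ
      · exact hc.2.2 α (Finset.mem_of_mem_erase hα) β (Finset.mem_of_mem_erase hβ) hne
      · refine Finset.disjoint_left.mpr fun {v} hv hv' => ?_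
        exact (hbvf β hβ v hv').1 (Finset.mem_sup.mpr ⟨α, Finset.mem_of_mem_erase hα, hv⟩)
      · refine Finset.disjoint_left.mpr fun {v} hv hv' => ?_
        exact (hbvf α hα v hv).1 (Finset.mem_sup.mpr ⟨β, Finset.mem_of_mem_erase hβ, hv'⟩)
      · exact hpair α hα β hβ hne
  · intro v hv hv'
    rw [Finset.mem_sup] at hv'
    obtain ⟨α, hα, hvα⟩ := hv'
    rcases Finset.mem_union.mp hα with hα | hα
    · exact hE v hv (Finset.mem_sup.mpr ⟨α, Finset.mem_of_mem_erase hα, hvα⟩)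
    · exact (hbvf α hα v hvα).2.2 hv

/-- a set of modules and LBF universal formulas is Existential-safe -/
lemma exsafe_of {Γ' : Finset Formula}
    (hlbf : ∀ χ ∈ Γ', LBFalpha χ)
    (hno : ∀ χ ∈ Γ', (∀ a b, χ ≠ .and a b) ∧ (∀ a b, χ ≠ .or a b) ∧ (∀ x γ, χ ≠ .ex x γ)) :
    ExSafe Γ' := by
  intro χ hχ β hβ
  have hl := hlbf χ hχ
  obtain ⟨hna, hno', hne⟩ := hno χ hχ
  cases χ with
  | atom p args => simp at hβ; subst hβ; exact Or.inl rfl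
  | neg χ0 =>
      simp at hβ; subst hβ
      obtain ⟨p, args, rfl⟩ := lbf_neg_inv hl
      exact Or.inl rfl
  | and a b => exact absurd rfl (hna a b)
  | or a b => exact absurd rfl (hno' a b)
  | box χ0 => simp at hβ; subst hβ; exact Or.inl rfl
  | dia χ0 => simp at hβ; subst hβ; exact Or.inl rfl
  | ex x χ0 => exact absurd rfl (hne x χ0)
  | all y χ0 =>
      obtain ⟨ys, ψ, rfl, hψ⟩ := lbf_all_inv hl
      have : Formula.all y (ys.foldr Formula.all ψ) = (y :: ys).foldr Formula.all ψ := rfl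
      rw [this] at hβ
      exact allPrefix_comps hψ (y :: ys) β hβ

lemma isLiteral_of_module {φ : Formula} (h : φ.isModuleB = true)
    (h1 : ∀ χ, φ ≠ .box χ) (h2 : ∀ χ, φ ≠ .dia χ) : φ.isLiteralB = true := by
  cases φ with
  | box χ => exact absurd rfl (h1 χ)
  | dia χ => exact absurd rfl (h2 χ)
  | _ => simpa [Formula.isModuleB] using h

lemma mrank_literal {φ : Formula} (h : φ.isLiteralB = true) : φ.shape.mrank = 0 := by
  cases φ with
  | atom p args => rfl
  | neg χ => cases χ <;> simp [Formula.isLiteralB] at h <;> rfl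
  | _ => simp [Formula.isLiteralB] at h
/-! ### progress: every non-literal clean LBF node admits a measure-decreasing step -/

lemma progress {w : List ℕ} {Γ : Finset Formula} {σ : Finset ℕ}
    (hI : NInv ⟨w, Γ, σ⟩) :
    (∀ φ ∈ Γ, φ.isLiteralB = true) ∨
    ∃ cs, Step ⟨w, Γ, σ⟩ cs ∧ ∀ c ∈ cs, NR c ⟨w, Γ, σ⟩ := by
  obtain ⟨⟨hcl, hσ⟩, hlbf⟩ := hI
  simp only at hcl hσ hlbf
  by_cases hand : ∃ a b, Formula.and a b ∈ Γ
  · obtain ⟨a, b, h⟩ := hand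
    refine Or.inr ⟨_, Step.and h, ?_⟩
    intro c hc
    simp only [List.mem_singleton] at hc; subst hc
    have hsum : (Γ.erase (Formula.and a b)).sum (fun χ => χ.shape.exC)
        + (Formula.and a b).shape.exC = Γ.sum (fun χ => χ.shape.exC) :=
      Finset.sum_erase_add _ _ h
    have hsumv : (Γ.erase (Formula.and a b)).sum (fun χ => χ.shape.gval σ.card)
        + (Formula.and a b).shape.gval σ.card = Γ.sum (fun χ => χ.shape.gval σ.card) :=
      Finset.sum_erase_add _ _ h
    apply NR_of
    · simp only [muM]
      apply Finset.sup_le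
      intro χ hχ
      rcases Finset.mem_insert.mp hχ with rfl | hχ
      · exact le_trans (by simp only [Formula.shape, Skel.mrank]; omega)
          (Finset.le_sup (f := fun χ => χ.shape.mrank) h)
      rcases Finset.mem_insert.mp hχ with rfl | hχ
      · exact le_trans (by simp only [Formula.shape, Skel.mrank]; omega)
          (Finset.le_sup (f := fun χ => χ.shape.mrank) h)
      · exact Finset.le_sup (f := fun χ => χ.shape.mrank) (Finset.mem_of_mem_erase hχ)
    · refine Or.inr ⟨?_, Or.inr ?_⟩
      · simp only [muE]
        have h1 := sum_insert_le' (fun φ => φ.shape.exC) a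
          (insert b (Γ.erase (Formula.and a b)))
        have h2 := sum_insert_le' (fun φ => φ.shape.exC) b (Γ.erase (Formula.and a b))
        have h3 : (Formula.and a b).shape.exC = a.shape.exC + b.shape.exC := rfl
        omega
      · simp only [muV]
        have h1 := sum_insert_le' (fun φ => φ.shape.gval σ.card) a
          (insert b (Γ.erase (Formula.and a b)))
        have h2 := sum_insert_le' (fun φ => φ.shape.gval σ.card) b (Γ.erase (Formula.and a b))
        have h3 : (Formula.and a b).shape.gval σ.card
            = a.shape.gval σ.card + b.shape.gval σ.card + 1 := rfl
        omega
  by_cases hor : ∃ a b, Formula.or a b ∈ Γ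
  · obtain ⟨a, b, h⟩ := hor
    refine Or.inr ⟨_, Step.orL h, ?_⟩
    intro c hc
    simp only [List.mem_singleton] at hc; subst hc
    have hsum : (Γ.erase (Formula.or a b)).sum (fun χ => χ.shape.exC)
        + (Formula.or a b).shape.exC = Γ.sum (fun χ => χ.shape.exC) :=
      Finset.sum_erase_add _ _ h
    have hsumv : (Γ.erase (Formula.or a b)).sum (fun χ => χ.shape.gval σ.card)
        + (Formula.or a b).shape.gval σ.card = Γ.sum (fun χ => χ.shape.gval σ.card) :=
      Finset.sum_erase_add _ _ h
    apply NR_of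
    · simp only [muM]
      apply Finset.sup_le
      intro χ hχ
      rcases Finset.mem_insert.mp hχ with rfl | hχ
      · exact le_trans (by simp only [Formula.shape, Skel.mrank]; omega)
          (Finset.le_sup (f := fun χ => χ.shape.mrank) h)
      · exact Finset.le_sup (f := fun χ => χ.shape.mrank) (Finset.mem_of_mem_erase hχ)
    · refine Or.inr ⟨?_, Or.inr ?_⟩
      · simp only [muE]
        have h1 := sum_insert_le' (fun φ => φ.shape.exC) a (Γ.erase (Formula.or a b))
        have h3 : (Formula.or a b).shape.exC = a.shape.exC + b.shape.exC := rfl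
        omega
      · simp only [muV]
        have h1 := sum_insert_le' (fun φ => φ.shape.gval σ.card) a (Γ.erase (Formula.or a b))
        have h3 : (Formula.or a b).shape.gval σ.card
            = a.shape.gval σ.card + b.shape.gval σ.card + 1 := rfl
        omega
  by_cases hex : ∃ x γ, Formula.ex x γ ∈ Γ
  · obtain ⟨x, φ, h⟩ := hex
    refine Or.inr ⟨_, Step.exis h, ?_⟩
    intro c hc
    simp only [List.mem_singleton] at hc; subst hc
    have hsum : (Γ.erase (Formula.ex x φ)).sum (fun χ => χ.shape.exC)
        + (Formula.ex x φ).shape.exC = Γ.sum (fun χ => χ.shape.exC) :=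
      Finset.sum_erase_add _ _ h
    apply NR_of
    · simp only [muM]
      apply Finset.sup_le
      intro χ hχ
      rcases Finset.mem_insert.mp hχ with rfl | hχ
      · exact le_trans (by simp only [Formula.shape, Skel.mrank]; omega)
          (Finset.le_sup (f := fun χ => χ.shape.mrank) h)
      · exact Finset.le_sup (f := fun χ => χ.shape.mrank) (Finset.mem_of_mem_erase hχ)
    · refine Or.inr ⟨?_, Or.inl ?_⟩ <;>
      · simp only [muE]
        have h1 := sum_insert_le' (fun φ => φ.shape.exC) φ (Γ.erase (Formula.ex x φ))
        have h3 : (Formula.ex x φ).shape.exC = φ.shape.exC + 1 := rfl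
        omega
  by_cases hall : ∃ y γ, Formula.all y γ ∈ Γ
  · obtain ⟨y, φ, h⟩ := hall
    -- clean facts about `all y φ`
    obtain ⟨huBφ, hybv⟩ : φ.uniqueBinders ∧ y ∉ φ.bv := hcl.uB h
    have hfv_all : (Formula.all y φ).fv = φ.fv.erase y := rfl
    have hbv_all : (Formula.all y φ).bv = insert y φ.bv := rfl
    have hfvbv : ∀ v ∈ φ.fv, v ∉ φ.bv := by
      intro v hv hv'
      by_cases hvy : v = y
      · exact hybv (hvy ▸ hv')
      · exact hcl.fv_bv h h (φ := Formula.all y φ)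
          (by rw [hfv_all]; exact Finset.mem_erase.mpr ⟨hvy, hv⟩)
          (by rw [hbv_all]; exact Finset.mem_insert.mpr (Or.inr hv'))
    set N : ℕ := ((Γ.sup Formula.fv) ∪ (Γ.sup Formula.bv) ∪ σ).sup id with hN
    have hbound : ∀ v, (v ∈ Γ.sup Formula.fv ∨ v ∈ Γ.sup Formula.bv ∨ v ∈ σ) → v ≤ N := by
      intro v hv
      have : v ∈ (Γ.sup Formula.fv) ∪ (Γ.sup Formula.bv) ∪ σ := by
        simp only [Finset.mem_union]; tauto
      exact Finset.le_sup (f := id) this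
    have hfvN : ∀ v ∈ φ.fv, v ≤ N := by
      intro v hv
      by_cases hvy : v = y
      · subst hvy
        exact hbound v (Or.inr (Or.inl (Finset.mem_sup.mpr
          ⟨Formula.all v φ, h, by rw [hbv_all]; exact Finset.mem_insert_self _ _⟩)))
      · exact hbound v (Or.inl (Finset.mem_sup.mpr
          ⟨Formula.all y φ, h, by rw [hfv_all]; exact Finset.mem_erase.mpr ⟨hvy, hv⟩⟩))
    have hbvN : ∀ v ∈ φ.bv, v ≤ N := by
      intro v hv
      exact hbound v (Or.inr (Or.inl (Finset.mem_sup.mpr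
        ⟨Formula.all y φ, h, by rw [hbv_all]; exact Finset.mem_insert.mpr (Or.inr hv)⟩)))
    have hσN : ∀ z ∈ σ, z ≤ N := fun z hz => hbound z (Or.inr (Or.inr hz))
    have hσbv : ∀ z ∈ σ, z ∉ φ.bv := by
      intro z hz hz'
      exact hσ z hz (Finset.mem_sup.mpr ⟨Formula.all y φ, h,
        by rw [hbv_all]; exact Finset.mem_insert.mpr (Or.inr hz')⟩)
    set g : ℕ → ℕ → ℕ := fun z v => if v ∈ φ.bv then N + 1 + z * (N + 1) + v else v with hg
    set f : ℕ → Formula := fun z => (φ.subst y z).mapVar (g z) with hf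
    -- basic facts about the instances
    have hχfv : ∀ z, ∀ v ∈ (φ.subst y z).fv, (v ∈ φ.fv ∧ v ≠ y) ∨ v = z := by
      intro z v hv
      have := fv_subst_subset y z φ hv
      rcases Finset.mem_union.mp this with h' | h'
      · exact Or.inl ⟨(Finset.mem_erase.mp h').2, (Finset.mem_erase.mp h').1⟩
      · exact Or.inr (Finset.mem_singleton.mp h')
    have hχfv_nbv : ∀ z ∈ σ, ∀ v ∈ (φ.subst y z).fv, v ∉ φ.bv := by
      intro z hz v hv
      rcases hχfv z v hv with ⟨h1, _⟩ | rfl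
      · exact hfvbv v h1
      · exact hσbv v hz
    have hχfvN : ∀ z ∈ σ, ∀ v ∈ (φ.subst y z).fv, v ≤ N := by
      intro z hz v hv
      rcases hχfv z v hv with ⟨h1, _⟩ | rfl
      · exact hfvN v h1
      · exact hσN v hz
    have hgbv : ∀ z, ∀ v ∈ φ.bv, g z v = N + 1 + z * (N + 1) + v := by
      intro z v hv; simp only [hg, if_pos hv]
    have hgnbv : ∀ z, ∀ v, v ∉ φ.bv → g z v = v := by
      intro z v hv; simp only [hg, if_neg hv]
    have hinj : ∀ z ∈ σ, ∀ v ∈ (φ.subst y z).fv ∪ (φ.subst y z).bv,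
        ∀ u ∈ (φ.subst y z).fv ∪ (φ.subst y z).bv, g z v = g z u → v = u := by
      intro z hz v hv u hu heq
      rw [bv_subst] at hv hu
      by_cases hvb : v ∈ φ.bv <;> by_cases hub : u ∈ φ.bv
      · rw [hgbv z v hvb, hgbv z u hub] at heq; omega
      · rw [hgbv z v hvb, hgnbv z u hub] at heq
        have huN : u ≤ N := by
          rcases Finset.mem_union.mp hu with h' | h'
          · exact hχfvN z hz u h'
          · exact absurd h' hub
        omega
      · rw [hgnbv z v hvb, hgbv z u hub] at heq
        have hvN : v ≤ N := by
          rcases Finset.mem_union.mp hv with h' | h'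
          · exact hχfvN z hz v h'
          · exact absurd h' hvb
        omega
      · rw [hgnbv z v hvb, hgnbv z u hub] at heq; exact heq
    have hbv_fz : ∀ z, (f z).bv = φ.bv.image (g z) := by
      intro z
      simp only [hf, bv_mapVar, bv_subst]
    have hfv_fz : ∀ z ∈ σ, (f z).fv = (φ.subst y z).fv := by
      intro z hz
      simp only [hf]
      rw [fv_mapVar _ _ (hinj z hz)]
      have : ∀ v ∈ (φ.subst y z).fv, g z v = v := by
        intro v hv; exact hgnbv z v (hχfv_nbv z hz v hv)
      calc Finset.image (g z) (φ.subst y z).fv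
          = Finset.image id (φ.subst y z).fv :=
            Finset.image_congr (fun v hv => this v hv)
        _ = (φ.subst y z).fv := Finset.image_id
    have huB_fz : ∀ z ∈ σ, (f z).uniqueBinders := by
      intro z hz
      refine uB_mapVar ?_ (uB_subst huBφ y z)
      intro v hv u hu heq
      rw [bv_subst] at hv hu
      exact hinj z hz v (Finset.mem_union_right _ (by rw [bv_subst]; exact hv))
        u (Finset.mem_union_right _ (by rw [bv_subst]; exact hu)) heq
    have hshape_fz : ∀ z, (f z).shape = φ.shape := by
      intro z; simp only [hf, shape_mapVar, shape_subst]
    have halpha : ∀ z ∈ σ, AlphaEq (f z) (φ.subst y z) := by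
      intro z hz
      have := alpha_mapVar (φ.subst y z) (g z) id (uB_subst huBφ y z)
        (fun v hv hv' => hχfv_nbv z hz v hv (by rwa [bv_subst] at hv'))
        (fun v hv u hu heq => hinj z hz v (Finset.mem_union_right _ hv)
          u (Finset.mem_union_right _ hu) heq)
        (fun v _ u _ heq => heq)
        (fun v hv u hu heq => by
          rw [bv_subst] at hu
          rw [hgnbv z v (hχfv_nbv z hz v hv), hgbv z u hu] at heq
          have := hχfvN z hz v hv
          omega)
        (fun v hv u hu heq => by
          rw [bv_subst] at hu
          have hvu : v = u := heq
          exact hχfv_nbv z hz v hv (hvu ▸ hu))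
        (fun v hv => (hgnbv z v (hχfv_nbv z hz v hv)))
      rwa [mapVar_id] at this
    -- fresh bound variables of instances
    have hbv_fresh : ∀ z ∈ σ, ∀ v ∈ (f z).bv,
        N < v ∧ N + 1 + z * (N + 1) ≤ v ∧ v ≤ N + 1 + z * (N + 1) + N := by
      intro z hz v hv
      rw [hbv_fz] at hv
      obtain ⟨u, hu, rfl⟩ := Finset.mem_image.mp hv
      rw [hgbv z u hu]
      have := hbvN u hu
      omega
    -- Existential-safety
    have hsafe : ExSafe (Γ.erase (Formula.all y φ)) := by
      apply exsafe_of
      · intro χ hχ; exact hlbf χ (Finset.mem_of_mem_erase hχ)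
      · intro χ hχ
        refine ⟨?_, ?_, ?_⟩
        · intro a b heq; exact hand ⟨a, b, heq ▸ Finset.mem_of_mem_erase hχ⟩
        · intro a b heq; exact hor ⟨a, b, heq ▸ Finset.mem_of_mem_erase hχ⟩
        · intro x γ heq; exact hex ⟨x, γ, heq ▸ Finset.mem_of_mem_erase hχ⟩
    -- cleanliness of the conclusion
    have key := cleanSet_step_fresh (Δ := σ.image f) (E := σ) hcl h
      (by intro δ hδ
          obtain ⟨z, hz, rfl⟩ := Finset.mem_image.mp hδ
          exact huB_fz z hz)
      (by intro δ hδ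
          obtain ⟨z, hz, rfl⟩ := Finset.mem_image.mp hδ
          intro v hv
          rw [hfv_fz z hz] at hv
          rcases hχfv z v hv with ⟨h1, h2⟩ | rfl
          · exact Finset.mem_union_left _ (by rw [hfv_all]; exact Finset.mem_erase.mpr ⟨h2, h1⟩)
          · exact Finset.mem_union_right _ hz)
      (by intro δ hδ v hv
          obtain ⟨z, hz, rfl⟩ := Finset.mem_image.mp hδ
          have hfr := hbv_fresh z hz v hv
          refine ⟨?_, ?_, ?_⟩
          · intro hmem
            exact absurd (hbound v (Or.inr (Or.inl hmem))) (by omega)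
          · intro hmem
            exact absurd (hbound v (Or.inl hmem)) (by omega)
          · intro hmem
            exact absurd (hbound v (Or.inr (Or.inr hmem))) (by omega))
      (by intro δ hδ δ' hδ' hne
          obtain ⟨z, hz, rfl⟩ := Finset.mem_image.mp hδ
          obtain ⟨z', hz', rfl⟩ := Finset.mem_image.mp hδ'
          have hzz : z ≠ z' := by
            intro hEq; exact hne (by rw [hEq])
          refine Finset.disjoint_left.mpr fun {v} hv hv' => ?_
          rw [hbv_fz] at hv hv'
          obtain ⟨u, hu, rfl⟩ := Finset.mem_image.mp hv
          obtain ⟨u', hu', heq⟩ := Finset.mem_image.mp hv'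
          rw [hgbv z u hu, hgbv z' u' hu'] at heq
          exact block_ne (hbvN u' hu') (hbvN u hu) (Ne.symm hzz) heq)
      (fun v hv => hσ v hv)
    refine Or.inr ⟨_, Step.alls f h hsafe halpha key.1 key.2, ?_⟩
    intro c hc
    simp only [List.mem_singleton] at hc; subst hc
    -- LBF facts for the measures
    obtain ⟨ys, ψ, hφeq, hψ⟩ := lbf_all_inv (hlbf _ h)
    have hexC : φ.shape.exC = 0 := by
      rw [hφeq, allPrefix_exC]; exact lbfpsi_exC hψ
    have hsum : (Γ.erase (Formula.all y φ)).sum (fun χ => χ.shape.exC)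
        + (Formula.all y φ).shape.exC = Γ.sum (fun χ => χ.shape.exC) :=
      Finset.sum_erase_add _ _ h
    have hsumv : (Γ.erase (Formula.all y φ)).sum (fun χ => χ.shape.gval σ.card)
        + (Formula.all y φ).shape.gval σ.card = Γ.sum (fun χ => χ.shape.gval σ.card) :=
      Finset.sum_erase_add _ _ h
    apply NR_of
    · simp only [muM]
      apply Finset.sup_le
      intro χ hχ
      rcases Finset.mem_union.mp hχ with hχ | hχ
      · exact Finset.le_sup (f := fun χ => χ.shape.mrank) (Finset.mem_of_mem_erase hχ)
      · obtain ⟨z, hz, rfl⟩ := Finset.mem_image.mp hχ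
        rw [hshape_fz]
        exact Finset.le_sup (f := fun χ => χ.shape.mrank) h
    · refine Or.inr ⟨?_, Or.inr ?_⟩
      · simp only [muE]
        have h1 := sum_union_le' (fun φ => φ.shape.exC) (Γ.erase (Formula.all y φ)) (σ.image f)
        have h2 := sum_image_le' (fun φ => φ.shape.exC) f σ
        have h3 : σ.sum (fun z => (f z).shape.exC) = 0 := by
          apply Finset.sum_eq_zero
          intro z hz
          rw [hshape_fz, hexC]
        have h4 : (Formula.all y φ).shape.exC = 0 := by
          have : (Formula.all y φ).shape.exC = φ.shape.exC := rfl
          rw [this, hexC]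
        omega
      · simp only [muV]
        have h1 := sum_union_le' (fun χ => χ.shape.gval σ.card)
          (Γ.erase (Formula.all y φ)) (σ.image f)
        have h2 := sum_image_le' (fun χ => χ.shape.gval σ.card) f σ
        have h3 : σ.sum (fun z => (f z).shape.gval σ.card) = σ.card * φ.shape.gval σ.card := by
          rw [Finset.sum_congr rfl (fun z _ => by rw [hshape_fz])]
          rw [Finset.sum_const, smul_eq_mul]
        have h4 : (Formula.all y φ).shape.gval σ.card
            = (σ.card + 2) * φ.shape.gval σ.card + 1 := rfl
        have h5 : 0 < φ.shape.gval σ.card := Skel.gval_pos _ _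
        have h6 : (σ.card + 2) * φ.shape.gval σ.card
            = σ.card * φ.shape.gval σ.card + 2 * φ.shape.gval σ.card := by ring
        omega
  -- only modules remain
  · have hmod : ∀ χ ∈ Γ, χ.isModuleB = true := by
      intro χ hχ
      refine lbf_module (hlbf χ hχ) ?_ ?_ ?_ ?_
      · intro a b heq; exact hand ⟨a, b, heq ▸ hχ⟩
      · intro a b heq; exact hor ⟨a, b, heq ▸ hχ⟩
      · intro x γ heq; exact hex ⟨x, γ, heq ▸ hχ⟩
      · intro x γ heq; exact hall ⟨x, γ, heq ▸ hχ⟩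
    by_cases hdia : ∃ γ, Formula.dia γ ∈ Γ
    · obtain ⟨ψ0, hd0⟩ := hdia
      refine Or.inr ⟨_, Step.diam hmod (diaBodies_ne_nil hd0), ?_⟩
      intro c hc
      simp only [List.mem_map] at hc
      obtain ⟨⟨i, ψ⟩, hmem, rfl⟩ := hc
      have hψ : ψ ∈ diaBodies Γ := by
        exact (List.of_mem_zip hmem).2
      have hdmem : Formula.dia ψ ∈ Γ := mem_diaBodies.mp hψ
      unfold NR
      apply Prod.Lex.left
      simp only [muM]
      have hpos : 0 < Γ.sup (fun φ => φ.shape.mrank) :=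
        lt_of_lt_of_le (by simp only [Formula.shape, Skel.mrank]; omega) (Finset.le_sup hdmem)
      rw [Finset.sup_lt_iff hpos]
      intro χ hχ
      rcases Finset.mem_insert.mp hχ with rfl | hχ
      · exact lt_of_lt_of_le (by simp only [Formula.shape, Skel.mrank]; omega)
          (Finset.le_sup hdmem)
      · have hb := mem_boxBodies.mp hχ
        exact lt_of_lt_of_le (by simp only [Formula.shape, Skel.mrank]; omega)
          (Finset.le_sup hb)
    by_cases hbox : ∃ γ, Formula.box γ ∈ Γ
    · obtain ⟨β0, hb0⟩ := hbox
      have hnd : diaBodies Γ = [] := by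
        rw [List.eq_nil_iff_forall_not_mem]
        intro ψ hψ
        exact hdia ⟨ψ, mem_diaBodies.mp hψ⟩
      have hbne : boxBodies Γ ≠ ∅ := by
        intro hemp
        have := mem_boxBodies.mpr hb0
        rw [hemp] at this
        exact absurd this (Finset.notMem_empty β0)
      refine Or.inr ⟨_, Step.fin hmod hnd hbne, ?_⟩
      intro c hc
      simp only [List.mem_singleton] at hc; subst hc
      unfold NR
      apply Prod.Lex.left
      simp only [muM]
      have hpos : 0 < Γ.sup (fun φ => φ.shape.mrank) :=
        lt_of_lt_of_le (by simp only [Formula.shape, Skel.mrank]; omega) (Finset.le_sup hb0)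
      rw [Finset.sup_lt_iff hpos]
      intro χ hχ
      rw [Finset.mem_filter] at hχ
      rw [mrank_literal hχ.2]
      exact hpos
    · left
      intro χ hχ
      refine isLiteral_of_module (hmod χ hχ) ?_ ?_
      · intro γ heq; exact hbox ⟨γ, heq ▸ hχ⟩
      · intro γ heq; exact hdia ⟨γ, heq ▸ hχ⟩
/-! ### building saturated tableaux -/

lemma inv_subtree {t s : Tab} (hsub : Subtree t s) :
    t.WF → NInv t.label → NInv s.label ∧ s.WF := by
  induction hsub with
  | refl t => exact fun hwf hI => ⟨hI, hwf⟩
  | child i hsub ih =>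
      next n k cs s =>
      intro hwf hI
      cases k with
      | zero => exact i.elim0
      | succ m =>
          obtain ⟨hstep, hwfs⟩ := hwf
          have hmem : (cs i).label ∈ (List.ofFn cs).map Tab.label := by
            apply List.mem_map_of_mem
            exact List.mem_ofFn.2 ⟨i, rfl⟩
          exact ih (hwfs i) (step_inv hstep hI _ hmem)

lemma progress' (n : Node) (hI : NInv n) :
    (∀ φ ∈ n.Γ, φ.isLiteralB = true) ∨ ∃ cs, Step n cs ∧ ∀ c ∈ cs, NR c n := by
  obtain ⟨w, Γ, σ⟩ := n
  exact progress hI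

lemma step_ne_nil {n : Node} {cs : List Node} (h : Step n cs) : cs ≠ [] := by
  cases h with
  | diam hmod hne =>
      intro hnil
      rw [List.map_eq_nil_iff] at hnil
      exact hne (by simpa using congrArg List.length hnil)
  | _ => simp

lemma satFrom : ∀ n : Node, NInv n → ∃ t : Tab, t.WF ∧ t.label = n ∧ Saturated t := by
  intro n
  refine WellFounded.induction (C := fun n => NInv n → ∃ t : Tab, t.WF ∧ t.label = n ∧ Saturated t) NR_wf n ?_
  intro m ih hI
  obtain ⟨w, Γ, σ⟩ := m
  rcases progress hI with hlit | ⟨cs, hstep, hR⟩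
  · refine ⟨Tab.mk ⟨w, Γ, σ⟩ 0 Fin.elim0, trivial, rfl, ?_⟩
    intro s hsub hleaf
    cases hsub with
    | refl => exact hlit
    | child i h => exact i.elim0
  · rcases cs with _ | ⟨c, cs'⟩
    · exact absurd rfl (step_ne_nil hstep)
    · have hidx : ∀ i : Fin (c :: cs').length,
          ∃ t : Tab, t.WF ∧ t.label = (c :: cs').get i ∧ Saturated t := by
        intro i
        have hmem : (c :: cs').get i ∈ c :: cs' := by exact List.get_mem _ _
        exact ih _ (hR _ hmem) (step_inv hstep hI _ hmem)
      choose tf htf using hidx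
      have hlabels : (List.ofFn tf).map Tab.label = c :: cs' := by
        rw [List.map_ofFn]
        have : (Tab.label ∘ tf) = (c :: cs').get := funext fun i => (htf i).2.1
        rw [this, List.ofFn_get]
      refine ⟨Tab.mk ⟨w, Γ, σ⟩ (c :: cs').length tf, ?_, rfl, ?_⟩
      · exact ⟨hlabels ▸ hstep, fun i => (htf i).1⟩
      · intro s hsub hleaf
        cases hsub with
        | refl => exact absurd hleaf (Nat.succ_ne_zero _)
        | child i h => exact (htf i).2.2 s h hleaf

lemma glue : ∀ t : Tab, t.WF → NInv t.label →
    ∃ t' : Tab, t'.WF ∧ t'.label = t.label ∧ Extends t' t ∧ Saturated t' := by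
  intro t
  induction t with
  | mk n k cs ih =>
      intro hwf hI
      cases k with
      | zero =>
          obtain ⟨t', hwf', hlab, hsat⟩ := satFrom n hI
          exact ⟨t', hwf', hlab, Extends.leaf hlab, hsat⟩
      | succ m =>
          obtain ⟨hstep, hwfs⟩ := hwf
          have hIc : ∀ i : Fin (m + 1), NInv (cs i).label := by
            intro i
            apply step_inv hstep hI
            apply List.mem_map_of_mem
            exact List.mem_ofFn.2 ⟨i, rfl⟩
          have hch : ∀ i : Fin (m + 1), ∃ t', t'.WF ∧ t'.label = (cs i).label ∧
              Extends t' (cs i) ∧ Saturated t' :=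
            fun i => ih i (hwfs i) (hIc i)
          choose tf htf using hch
          refine ⟨Tab.mk n (m + 1) tf, ⟨?_, fun i => (htf i).1⟩, rfl, ?_, ?_⟩
          · have heq : (List.ofFn tf).map Tab.label = (List.ofFn cs).map Tab.label := by
              rw [List.map_ofFn, List.map_ofFn]
              exact congrArg List.ofFn (funext fun i => (htf i).2.1)
            rw [heq]
            exact hstep
          · exact Extends.node (fun i => (htf i).2.2.1)
          · intro s hsub hleaf
            cases hsub with
            | refl => exact absurd hleaf (Nat.succ_ne_zero m)
            | child i h => exact (htf i).2.2.2 s h hleaf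

/-- In the tableau system for LBF, for every (well-formed)
tableau whose root node is clean and consists of LBF formulas, every leaf node
either contains only literals or admits the application of at least one
tableau rule.  Consequently every partial tableau for an LBF formula can be
extended to a saturated tableau. -/
theorem lbf_tableau_rule_applicable :
    (∀ t : Tab, t.WF → NodeClean t.label → (∀ φ ∈ t.label.Γ, LBFalpha φ) →
      ∀ s : Tab, Subtree t s → s.isLeaf →
        (∀ φ ∈ s.label.Γ, φ.isLiteralB = true) ∨ ∃ cs, Step s.label cs) ∧
    (∀ t : Tab, t.WF → NodeClean t.label → (∀ φ ∈ t.label.Γ, LBFalpha φ) →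
      ∃ t' : Tab, t'.WF ∧ Extends t' t ∧ Saturated t') := by
  constructor
  · intro t hwf hcl hlbf s hsub hleaf
    have hIs := (inv_subtree hsub hwf ⟨hcl, hlbf⟩).1
    rcases progress' s.label hIs with hlit | ⟨cs, hstep, _⟩
    · exact Or.inl hlit
    · exact Or.inr ⟨cs, hstep⟩
  · intro t hwf hcl hlbf
    obtain ⟨t', hwf', _, hext, hsat⟩ := glue t hwf ⟨hcl, hlbf⟩
    exact ⟨t', hwf', hext, hsat⟩
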